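/- Main existence theorem for conditional Chisini means: Suppose T : L^∞(Ω,F) → ℝ satisfies T(0) = 0, (G-Mo), (G-QL) and (G-PC) for a sub-σ-algebra G ⊆ F. Then for any bounded F-measurable f at which T satisfies (G-PS) and (G-NB), there exists a bounded G-measurable ĝ with T(f·1_A) = T(ĝ·1_A) for all A ∈ G, and ĝ is unique up to modification on a set in N_G. -/

import Mathlib

open Filter Topology MeasureTheory

/-- Bounded measurable real-valued functions w.r.t. a σ-algebra `mG`. -/
def BddMeas {Ω : Type*} (mG : MeasurableSpace Ω) (f : Ω → ℝ) : Prop :=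
  Measurable[mG] f ∧ ∃ C : ℝ, ∀ ω, |f ω| ≤ C

/-- The class of irrelevant (null) events in `mG` for the functional `T`. -/
def NullG {Ω : Type*} (mG : MeasurableSpace Ω) (T : (Ω → ℝ) → ℝ) : Set (Set Ω) :=
  {N | MeasurableSet[mG] N ∧ ∀ g₁ g₂ : Ω → ℝ, BddMeas mG g₁ → BddMeas mG g₂ →
    T (g₁ + N.indicator g₂) = T g₁}

/-- (G-Mo): `T` is `G`-monotone. -/
def GMo {Ω : Type*} (mG : MeasurableSpace Ω) (T : (Ω → ℝ) → ℝ) : Prop :=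
  ∀ x y : ℝ, x < y → ∀ g : Ω → ℝ, BddMeas mG g → ∀ A : Set Ω,
    MeasurableSet[mG] A → A ∉ NullG mG T →
    T (A.indicator (fun _ => x) + Aᶜ.indicator g) <
      T (A.indicator (fun _ => y) + Aᶜ.indicator g)

/-- (G-QL): `T` is `G`-quasilinear. -/
def GQL {Ω : Type*} (mG : MeasurableSpace Ω) (T : (Ω → ℝ) → ℝ) : Prop :=
  ∀ g₁ g₂ : Ω → ℝ, BddMeas mG g₁ → BddMeas mG g₂ → ∀ A : Set Ω, MeasurableSet[mG] A →
    (∃ gb : Ω → ℝ, BddMeas mG gb ∧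
      T (A.indicator g₁ + Aᶜ.indicator gb) ≤ T (A.indicator g₂ + Aᶜ.indicator gb)) →
    ∀ g : Ω → ℝ, BddMeas mG g →
      T (A.indicator g₁ + Aᶜ.indicator g) ≤ T (A.indicator g₂ + Aᶜ.indicator g)

/-- (G-PC): `T` is `G`-pointwise continuous. -/
def GPC {Ω : Type*} (mG : MeasurableSpace Ω) (T : (Ω → ℝ) → ℝ) : Prop :=
  ∀ (gn : ℕ → Ω → ℝ) (g : Ω → ℝ), (∀ n, BddMeas mG (gn n)) → BddMeas mG g →
    (∃ C : ℝ, ∀ n ω, |gn n ω| ≤ C) →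
    (∀ ω, Tendsto (fun n => gn n ω) atTop (𝓝 (g ω))) →
    Tendsto (fun n => T (gn n)) atTop (𝓝 (T g))

/-- The sup norm of a bounded function. -/
noncomputable def supNorm {Ω : Type*} (f : Ω → ℝ) : ℝ := ⨆ ω, |f ω|

/-- (G-PS): `T` is `G`-pasting at `f`. -/
def GPS {Ω : Type*} (mG : MeasurableSpace Ω) (T : (Ω → ℝ) → ℝ) (f : Ω → ℝ) : Prop :=
  ∀ A₁ A₂ : Set Ω, MeasurableSet[mG] A₁ → MeasurableSet[mG] A₂ → Disjoint A₁ A₂ →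
    ∀ x₁ x₂ : ℝ, T (A₁.indicator f) = T (A₁.indicator fun _ => x₁) →
      T (A₂.indicator f) = T (A₂.indicator fun _ => x₂) →
      T (A₁.indicator f + A₂.indicator f) =
        T (A₁.indicator (fun _ => x₁) + A₂.indicator fun _ => x₂)

/-- (G-NB): `T` is `G`-norm bounded at `f`. -/
def GNB {Ω : Type*} (mG : MeasurableSpace Ω) (T : (Ω → ℝ) → ℝ) (f : Ω → ℝ) : Prop :=
  ∀ A : Set Ω, MeasurableSet[mG] A →
    T (A.indicator fun _ => -(supNorm f)) ≤ T (A.indicator f) ∧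
    T (A.indicator f) ≤ T (A.indicator fun _ => supNorm f)

section Helpers

variable {Ω : Type*} {mG : MeasurableSpace Ω} {T : (Ω → ℝ) → ℝ}

lemma bdd_const (c : ℝ) : BddMeas mG (fun _ : Ω => c) :=
  ⟨measurable_const, ⟨|c|, fun _ => le_refl _⟩⟩

lemma bdd_zero : BddMeas mG (0 : Ω → ℝ) := bdd_const 0

lemma bdd_add {g₁ g₂ : Ω → ℝ} (h₁ : BddMeas mG g₁) (h₂ : BddMeas mG g₂) :
    BddMeas mG (g₁ + g₂) := by
  obtain ⟨m₁, C₁, hC₁⟩ := h₁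
  obtain ⟨m₂, C₂, hC₂⟩ := h₂
  exact ⟨m₁.add m₂, ⟨C₁ + C₂, fun ω => (abs_add_le _ _).trans (add_le_add (hC₁ ω) (hC₂ ω))⟩⟩

lemma bdd_indicator {g : Ω → ℝ} (hg : BddMeas mG g) {A : Set Ω}
    (hA : MeasurableSet[mG] A) : BddMeas mG (A.indicator g) := by
  obtain ⟨m, C, hC⟩ := hg
  refine ⟨m.indicator hA, ⟨|C| , fun ω => ?_⟩⟩
  by_cases h : ω ∈ A
  · simp only [Set.indicator_of_mem h]; exact (hC ω).trans (le_abs_self C)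
  · simp [Set.indicator_of_notMem h]

lemma bdd_indicator_const (c : ℝ) {A : Set Ω} (hA : MeasurableSet[mG] A) :
    BddMeas mG (A.indicator (fun _ => c)) := bdd_indicator (bdd_const c) hA

lemma bdd_sub {g₁ g₂ : Ω → ℝ} (h₁ : BddMeas mG g₁) (h₂ : BddMeas mG g₂) :
    BddMeas mG (g₁ - g₂) := by
  obtain ⟨m₁, C₁, hC₁⟩ := h₁
  obtain ⟨m₂, C₂, hC₂⟩ := h₂
  exact ⟨m₁.sub m₂, ⟨C₁ + C₂, fun ω => (abs_sub _ _).trans (add_le_add (hC₁ ω) (hC₂ ω))⟩⟩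

/-! ### Null sets -/

lemma null_measurable {N : Set Ω} (hN : N ∈ NullG mG T) : MeasurableSet[mG] N := hN.1

lemma null_empty (hT0 : T 0 = 0) : (∅ : Set Ω) ∈ NullG mG T := by
  refine ⟨MeasurableSet.empty, fun g₁ g₂ _ _ => ?_⟩
  have h : g₁ + (∅ : Set Ω).indicator g₂ = g₁ := by
    funext ω; simp
  rw [h]

lemma null_subset {N M : Set Ω} (hN : N ∈ NullG mG T) (hM : MeasurableSet[mG] M)
    (hMN : M ⊆ N) : M ∈ NullG mG T := by
  classical
  refine ⟨hM, fun g₁ g₂ hg₁ hg₂ => ?_⟩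
  have h : M.indicator g₂ = N.indicator (M.indicator g₂) := by
    funext ω
    by_cases h : ω ∈ M
    · rw [Set.indicator_of_mem (hMN h), Set.indicator_of_mem h]
    · rw [Set.indicator_of_notMem h, Set.indicator_apply]
      split <;> simp [Set.indicator_of_notMem h]
  rw [h]
  exact hN.2 g₁ (M.indicator g₂) hg₁ (bdd_indicator hg₂ hM)

lemma null_union {N₁ N₂ : Set Ω} (h₁ : N₁ ∈ NullG mG T) (h₂ : N₂ ∈ NullG mG T) :
    N₁ ∪ N₂ ∈ NullG mG T := by
  refine ⟨h₁.1.union h₂.1, fun g₁ g₂ hg₁ hg₂ => ?_⟩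
  have key : (N₁ ∪ N₂).indicator g₂ = N₁.indicator g₂ + (N₂ \ N₁).indicator g₂ := by
    funext ω
    by_cases hω₁ : ω ∈ N₁
    · simp [Set.indicator_of_mem, Set.indicator_of_mem (Set.mem_union_left _ hω₁), hω₁,
        Set.indicator_apply, Set.mem_diff]
    · by_cases hω₂ : ω ∈ N₂ <;>
        simp [Set.indicator_apply, hω₁, hω₂, Set.mem_diff]
  rw [key, ← add_assoc]
  have hd : (N₂ \ N₁) ∈ NullG mG T := null_subset h₂ (h₂.1.diff h₁.1) Set.diff_subset
  rw [hd.2 (g₁ + N₁.indicator g₂) g₂ (bdd_add hg₁ (bdd_indicator hg₂ h₁.1)) hg₂]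
  exact h₁.2 g₁ g₂ hg₁ hg₂

lemma null_finset_iUnion {ι : Type*} (hT0 : T 0 = 0) (s : Finset ι) (N : ι → Set Ω)
    (h : ∀ i ∈ s, N i ∈ NullG mG T) : (⋃ i ∈ s, N i) ∈ NullG mG T := by
  classical
  induction s using Finset.induction_on with
  | empty => simpa using null_empty hT0
  | @insert a s' hni ih =>
      rw [Finset.set_biUnion_insert]
      exact null_union (h a (Finset.mem_insert_self a s'))
        (ih (fun i hi => h i (Finset.mem_insert_of_mem hi)))

lemma null_iUnion (hT0 : T 0 = 0) (hPC : GPC mG T) (N : ℕ → Set Ω)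
    (h : ∀ n, N n ∈ NullG mG T) : (⋃ n, N n) ∈ NullG mG T := by
  have hmeas : MeasurableSet[mG] (⋃ n, N n) := MeasurableSet.iUnion (fun n => (h n).1)
  refine ⟨hmeas, fun g₁ g₂ hg₁ hg₂ => ?_⟩
  set U : ℕ → Set Ω := fun n => ⋃ i ∈ Finset.range (n+1), N i with hU
  have hUnull : ∀ n, U n ∈ NullG mG T := fun n =>
    null_finset_iUnion hT0 _ _ (fun i _ => h i)
  have hUmeas : ∀ n, MeasurableSet[mG] (U n) := fun n => (hUnull n).1
  have hval : ∀ n, T (g₁ + (U n).indicator g₂) = T g₁ := fun n =>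
    (hUnull n).2 g₁ g₂ hg₁ hg₂
  have hconv : ∀ ω, Tendsto (fun n => (g₁ + (U n).indicator g₂) ω) atTop
      (𝓝 ((g₁ + (⋃ n, N n).indicator g₂) ω)) := by
    intro ω
    by_cases hω : ω ∈ ⋃ n, N n
    · obtain ⟨k, hk⟩ := Set.mem_iUnion.1 hω
      have : ∀ n ≥ k, (g₁ + (U n).indicator g₂) ω = (g₁ + (⋃ n, N n).indicator g₂) ω := by
        intro n hn
        have hωU : ω ∈ U n := Set.mem_biUnion (Finset.mem_range.2 (lt_of_le_of_lt hn (Nat.lt_succ_self n))) hk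
        simp [Set.indicator_of_mem hωU, Set.indicator_of_mem hω]
      exact tendsto_const_nhds.congr' (eventually_atTop.2 ⟨k, fun n hn => (this n hn).symm⟩)
    · have : ∀ n, (g₁ + (U n).indicator g₂) ω = (g₁ + (⋃ n, N n).indicator g₂) ω := by
        intro n
        have hωU : ω ∉ U n := by
          intro hc
          obtain ⟨i, _, hmem⟩ := Set.mem_iUnion₂.1 hc
          exact hω (Set.mem_iUnion.2 ⟨i, hmem⟩)
        simp [Set.indicator_of_notMem hωU, Set.indicator_of_notMem hω]
      simp only [this]
      exact tendsto_const_nhds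
  obtain ⟨C₁, hC₁⟩ := hg₁.2
  obtain ⟨C₂, hC₂⟩ := hg₂.2
  have hbd : ∃ C : ℝ, ∀ n ω, |(g₁ + (U n).indicator g₂) ω| ≤ C := by
    refine ⟨C₁ + C₂, fun n ω => ?_⟩
    refine (abs_add_le _ _).trans (add_le_add (hC₁ ω) ?_)
    by_cases h : ω ∈ U n
    · rw [Set.indicator_of_mem h]; exact hC₂ ω
    · rw [Set.indicator_of_notMem h]
      simpa using (abs_nonneg _).trans (hC₂ ω)
  have := hPC (fun n => g₁ + (U n).indicator g₂) (g₁ + (⋃ n, N n).indicator g₂)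
    (fun n => bdd_add hg₁ (bdd_indicator hg₂ (hUmeas n)))
    (bdd_add hg₁ (bdd_indicator hg₂ hmeas)) hbd hconv
  simp only [hval] at this
  exact tendsto_nhds_unique this tendsto_const_nhds

lemma null_countable_iUnion {ι : Type*} [Countable ι] (hT0 : T 0 = 0) (hPC : GPC mG T)
    (N : ι → Set Ω) (h : ∀ i, N i ∈ NullG mG T) : (⋃ i, N i) ∈ NullG mG T := by
  cases isEmpty_or_nonempty ι
  · simpa [Set.iUnion_of_empty] using null_empty hT0
  · obtain ⟨e, he⟩ := (exists_surjective_nat ι)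
    rw [← he.iUnion_comp N]
    exact null_iUnion hT0 hPC _ (fun n => h (e n))

end Helpers
section Mono

variable {Ω : Type*} {mG : MeasurableSpace Ω} {T : (Ω → ℝ) → ℝ}

lemma stepMono (hMo : GMo mG T) {A : Set Ω} (hA : MeasurableSet[mG] A)
    {g : Ω → ℝ} (hg : BddMeas mG g) (hg0 : ∀ ω ∈ A, g ω = 0) {x y : ℝ} (hxy : x ≤ y) :
    T (A.indicator (fun _ => x) + g) ≤ T (A.indicator (fun _ => y) + g) := by
  have hgind : Aᶜ.indicator g = g := by
    funext ω
    by_cases h : ω ∈ A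
    · simp [Set.indicator_of_notMem, h, hg0 ω h]
    · simp [Set.indicator_of_mem, h]
  rcases eq_or_lt_of_le hxy with h | h
  · subst h; exact le_refl _
  by_cases hnull : A ∈ NullG mG T
  · have e : ∀ z : ℝ, T (A.indicator (fun _ => z) + g) = T g := by
      intro z
      have hcm : A.indicator (fun _ => z) + g = g + A.indicator (fun _ => z) := add_comm _ _
      rw [hcm, hnull.2 g (fun _ => z) hg (bdd_const z)]
    rw [e x, e y]
  · have := hMo x y h g hg A hA hnull
    rw [hgind] at this
    exact le_of_lt this

lemma updMono (hMo : GMo mG T) {ι : Type*} [Countable ι] [MeasurableSpace ι]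
    [MeasurableSingletonClass ι] {k : Ω → ι} (hk : Measurable[mG] k) (K : Finset ι)
    (hKk : ∀ ω, k ω ∈ K) :
    ∀ s : Finset ι, ∀ c d : ι → ℝ, (∀ p, p ∉ s → c p = d p) → (∀ p, c p ≤ d p) →
      T (fun ω => c (k ω)) ≤ T (fun ω => d (k ω)) := by
  classical
  intro s
  induction s using Finset.induction_on with
  | empty =>
      intro c d hcd _
      have : (fun ω => c (k ω)) = (fun ω => d (k ω)) := by
        funext ω; exact hcd _ (by simp)
      rw [this]
  | @insert a s' hni ih =>
      intro c d hcd hle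
      set c' : ι → ℝ := Function.update c a (d a) with hc'
      have bddc : ∀ e : ι → ℝ, BddMeas mG (fun ω => e (k ω)) := by
        intro e
        refine ⟨(measurable_of_countable e).comp hk, ⟨∑ p ∈ K, |e p|, fun ω => ?_⟩⟩
        exact Finset.single_le_sum (f := fun p => |e p|) (fun p _ => abs_nonneg _) (hKk ω)
      have step1 : T (fun ω => c (k ω)) ≤ T (fun ω => c' (k ω)) := by
        set A : Set Ω := k ⁻¹' {a} with hA
        have hAm : MeasurableSet[mG] A := hk (measurableSet_singleton a)
        set g : Ω → ℝ := Aᶜ.indicator (fun ω => c (k ω)) with hgdef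
        have hgbdd : BddMeas mG g := bdd_indicator (bddc c) hAm.compl
        have hg0 : ∀ ω ∈ A, g ω = 0 := by
          intro ω hω; simp only [hgdef]
          exact Set.indicator_of_notMem (by simpa using hω) _
        have e1 : (fun ω => c (k ω)) = A.indicator (fun _ => c a) + g := by
          funext ω
          by_cases h : k ω = a
          · have hωA : ω ∈ A := h
            simp only [Pi.add_apply, Set.indicator_of_mem hωA, hgdef,
              Set.indicator_of_notMem (by simpa using hωA : ω ∉ Aᶜ), h, add_zero]
          · have hωA : ω ∉ A := h
            simp only [Pi.add_apply, Set.indicator_of_notMem hωA, hgdef,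
              Set.indicator_of_mem (by simpa using hωA : ω ∈ Aᶜ), zero_add]
        have e2 : (fun ω => c' (k ω)) = A.indicator (fun _ => d a) + g := by
          funext ω
          by_cases h : k ω = a
          · have hωA : ω ∈ A := h
            simp only [Pi.add_apply, Set.indicator_of_mem hωA, hgdef,
              Set.indicator_of_notMem (by simpa using hωA : ω ∉ Aᶜ), add_zero, hc']
            rw [h, Function.update_self]
          · have hωA : ω ∉ A := h
            simp only [Pi.add_apply, Set.indicator_of_notMem hωA, hgdef,
              Set.indicator_of_mem (by simpa using hωA : ω ∈ Aᶜ), zero_add, hc',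
              Function.update_of_ne h]
        rw [e1, e2]
        exact stepMono hMo hAm hgbdd hg0 (hle a)
      refine step1.trans (ih c' d ?_ ?_)
      · intro p hp
        by_cases h : p = a
        · subst h; simp [hc', Function.update_self]
        · rw [hc', Function.update_of_ne h]
          exact hcd p (by simp [h, hp])
      · intro p
        by_cases h : p = a
        · subst h; simp [hc', Function.update_self]
        · rw [hc', Function.update_of_ne h]; exact hle p

lemma ceil_div_bounds {m x : ℝ} (hm : 0 < m) :
    x ≤ (⌈m * x⌉ : ℝ) / m ∧ (⌈m * x⌉ : ℝ) / m ≤ x + 1 / m := by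
  constructor
  · rw [le_div_iff₀ hm, mul_comm]
    exact Int.le_ceil _
  · rw [div_le_iff₀ hm]
    have h1 : (⌈m * x⌉ : ℝ) < m * x + 1 := Int.ceil_lt_add_one _
    have h2 : (x + 1 / m) * m = m * x + 1 := by field_simp
    linarith

lemma monoT (hMo : GMo mG T) (hPC : GPC mG T) {g₁ g₂ : Ω → ℝ}
    (h₁ : BddMeas mG g₁) (h₂ : BddMeas mG g₂) (hle : ∀ ω, g₁ ω ≤ g₂ ω) :
    T g₁ ≤ T g₂ := by
  classical
  cases isEmpty_or_nonempty Ω with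
  | inl hemp =>
      have : g₁ = g₂ := funext (fun ω => (hemp.elim ω))
      rw [this]
  | inr hne =>
  obtain ⟨ω₀⟩ := hne
  obtain ⟨C₁, hC₁⟩ := h₁.2
  obtain ⟨C₂, hC₂⟩ := h₂.2
  set C : ℝ := max C₁ C₂ with hCdef
  have hb₁ : ∀ ω, |g₁ ω| ≤ C := fun ω => (hC₁ ω).trans (le_max_left _ _)
  have hb₂ : ∀ ω, |g₂ ω| ≤ C := fun ω => (hC₂ ω).trans (le_max_right _ _)
  have hCnn : 0 ≤ C := (abs_nonneg (g₁ ω₀)).trans (hb₁ ω₀)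
  have hm : ∀ n : ℕ, (0:ℝ) < (n:ℝ)+1 := fun n => by positivity
  set u : ℕ → Ω → ℝ := fun n ω => (⌈((n:ℝ)+1) * g₁ ω⌉ : ℝ) / ((n:ℝ)+1) with hu
  set v : ℕ → Ω → ℝ := fun n ω => (⌈((n:ℝ)+1) * g₂ ω⌉ : ℝ) / ((n:ℝ)+1) with hv
  have key2 : ∀ n : ℕ, T (u n) ≤ T (v n) := by
    intro n
    set m : ℝ := (n:ℝ)+1 with hmdef
    have hmpos : 0 < m := hm n
    set k : Ω → ℤ × ℤ := fun ω => (⌈m * g₁ ω⌉, ⌈m * g₂ ω⌉) with hk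
    have hkm : Measurable[mG] k := (h₁.1.const_mul m).ceil.prodMk (h₂.1.const_mul m).ceil
    set lo : ℤ := ⌈-(m*C)⌉ with hlo
    set hi : ℤ := ⌈m*C⌉ with hhi
    set K : Finset (ℤ×ℤ) := Finset.Icc lo hi ×ˢ Finset.Icc lo hi with hK
    have hbnds : ∀ (g : Ω → ℝ), (∀ ω, |g ω| ≤ C) → ∀ ω, lo ≤ ⌈m * g ω⌉ ∧ ⌈m * g ω⌉ ≤ hi := by
      intro g hg ω
      have h1 : -(m*C) ≤ m * g ω := by
        have := (abs_le.1 (hg ω)).1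
        nlinarith
      have h2 : m * g ω ≤ m * C := by
        have := (abs_le.1 (hg ω)).2
        nlinarith
      exact ⟨Int.ceil_le_ceil h1, Int.ceil_le_ceil h2⟩
    have hKk : ∀ ω, k ω ∈ K := by
      intro ω
      rw [hK, Finset.mem_product]
      constructor
      · rw [Finset.mem_Icc]; exact hbnds g₁ hb₁ ω
      · rw [Finset.mem_Icc]; exact hbnds g₂ hb₂ ω
    set s : Finset (ℤ×ℤ) := K.filter (fun p => p.1 ≤ p.2) with hs
    set d : ℤ×ℤ → ℝ := fun p => (p.2:ℝ)/m with hd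
    set c : ℤ×ℤ → ℝ := fun p => if p ∈ s then (p.1:ℝ)/m else d p with hc
    have hks : ∀ ω, k ω ∈ s := by
      intro ω
      rw [hs, Finset.mem_filter]
      refine ⟨hKk ω, ?_⟩
      exact Int.ceil_le_ceil (by nlinarith [hle ω])
    have e1 : (fun ω => c (k ω)) = u n := by
      funext ω
      simp only [hc, if_pos (hks ω)]; rfl
    have e2 : (fun ω => d (k ω)) = v n := rfl
    have := updMono hMo hkm K hKk s c d
      (fun p hp => by simp only [hc, if_neg hp]) ?_
    · rwa [e1, e2] at this
    · intro p
      by_cases hp : p ∈ s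
      · simp only [hc, if_pos hp, hd]
        have : (p.1:ℝ) ≤ (p.2:ℝ) := Int.cast_le.2 (Finset.mem_filter.1 hp).2
        exact (div_le_div_iff_of_pos_right hmpos).2 this
      · simp only [hc, if_neg hp]; exact le_refl _
  have hubnd : ∀ (g : Ω → ℝ), (∀ ω, |g ω| ≤ C) →
      ∀ (n:ℕ) ω, |(⌈((n:ℝ)+1) * g ω⌉ : ℝ) / ((n:ℝ)+1)| ≤ C + 1 := by
    intro g hgb n ω
    obtain ⟨hl, hr⟩ := ceil_div_bounds (x := g ω) (hm n)
    have h1m : 1/((n:ℝ)+1) ≤ 1 := by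
      rw [div_le_one (hm n)]; linarith [Nat.cast_nonneg (α := ℝ) n]
    have := abs_le.1 (hgb ω)
    rw [abs_le]; constructor <;> nlinarith
  have hmeasu : ∀ (g : Ω → ℝ), BddMeas mG g → (∀ ω, |g ω| ≤ C) →
      ∀ n:ℕ, BddMeas mG (fun ω => (⌈((n:ℝ)+1) * g ω⌉ : ℝ) / ((n:ℝ)+1)) := by
    intro g hg hgb n
    exact ⟨(measurable_of_countable (fun z : ℤ => (z:ℝ)/((n:ℝ)+1))).comp
      ((hg.1.const_mul _).ceil), ⟨C+1, hubnd g hgb n⟩⟩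
  have hconv : ∀ (g : Ω → ℝ), ∀ ω,
      Tendsto (fun n : ℕ => (⌈((n:ℝ)+1) * g ω⌉ : ℝ) / ((n:ℝ)+1)) atTop (𝓝 (g ω)) := by
    intro g ω
    have hup : Tendsto (fun n : ℕ => g ω + 1/((n:ℝ)+1)) atTop (𝓝 (g ω)) := by
      have h1 := tendsto_one_div_add_atTop_nhds_zero_nat (𝕜 := ℝ)
      have h2 := (tendsto_const_nhds (x := g ω) (f := (atTop : Filter ℕ))).add h1
      simpa using h2
    refine tendsto_of_tendsto_of_tendsto_of_le_of_le tendsto_const_nhds hup ?_ ?_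
    · intro n; exact (ceil_div_bounds (hm n)).1
    · intro n; exact (ceil_div_bounds (hm n)).2
  have Tu := hPC u g₁ (fun n => hmeasu g₁ h₁ hb₁ n) h₁ ⟨C+1, fun n ω => hubnd g₁ hb₁ n ω⟩
    (fun ω => hconv g₁ ω)
  have Tv := hPC v g₂ (fun n => hmeasu g₂ h₂ hb₂ n) h₂ ⟨C+1, fun n ω => hubnd g₂ hb₂ n ω⟩
    (fun ω => hconv g₂ ω)
  exact le_of_tendsto_of_tendsto' Tu Tv key2

end Mono
section Uniq

variable {Ω : Type*} {mG : MeasurableSpace Ω} {T : (Ω → ℝ) → ℝ}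

lemma gapLt (hT0 : T 0 = 0) (hMo : GMo mG T) (hPC : GPC mG T) {B : Set Ω}
    (hB : MeasurableSet[mG] B) (hBn : B ∉ NullG mG T) {g₁ g₂ : Ω → ℝ}
    (h₁ : BddMeas mG g₁) (h₂ : BddMeas mG g₂) {δ : ℝ} (hδ : 0 < δ)
    (hgap : ∀ ω ∈ B, g₁ ω + δ ≤ g₂ ω) :
    T (B.indicator g₁) < T (B.indicator g₂) := by
  classical
  obtain ⟨C₁, hC₁⟩ := h₁.2
  set k : Ω → ℤ := fun ω => ⌈3 * g₁ ω / δ⌉ with hk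
  have hkm : Measurable[mG] k := by
    have : Measurable[mG] (fun ω => 3 * g₁ ω / δ) := (h₁.1.const_mul 3).div_const δ
    exact this.ceil
  set lo : ℤ := ⌈-(3 * C₁ / δ)⌉ with hlo
  set hi : ℤ := ⌈3 * C₁ / δ⌉ with hhi
  set s : Finset ℤ := Finset.Icc lo hi with hs
  have hks : ∀ ω, k ω ∈ s := by
    intro ω
    rw [hs, Finset.mem_Icc]
    have h1 := (abs_le.1 (hC₁ ω)).1
    have h2 := (abs_le.1 (hC₁ ω)).2
    constructor
    · refine Int.ceil_le_ceil ?_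
      rw [← neg_div, div_le_div_iff_of_pos_right hδ]; linarith
    · refine Int.ceil_le_ceil ?_
      rw [div_le_div_iff_of_pos_right hδ]; linarith
  set Bi : ℤ → Set Ω := fun i => B ∩ k ⁻¹' {i} with hBi
  have hBim : ∀ i, MeasurableSet[mG] (Bi i) := fun i => hB.inter (hkm (measurableSet_singleton i))
  have hcover : B ⊆ ⋃ i ∈ s, Bi i := by
    intro ω hω
    exact Set.mem_biUnion (hks ω) ⟨hω, rfl⟩
  have hex : ∃ i ∈ s, Bi i ∉ NullG mG T := by
    by_contra hcon
    push_neg at hcon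
    exact hBn (null_subset (null_finset_iUnion hT0 s Bi hcon) hB hcover)
  obtain ⟨i, _, hBinn⟩ := hex
  set a : ℝ := (i:ℝ) * δ / 3 with ha
  have hval : ∀ ω ∈ Bi i, g₁ ω ≤ a ∧ a ≤ g₁ ω + δ/3 := by
    intro ω hω
    have hkω : k ω = i := hω.2
    have h1 : 3 * g₁ ω / δ ≤ (i:ℝ) := by
      rw [← hkω, hk]; exact Int.le_ceil _
    have h2 : (i:ℝ) < 3 * g₁ ω / δ + 1 := by
      rw [← hkω, hk]; exact Int.ceil_lt_add_one _
    constructor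
    · rw [ha]
      have h1' : 3 * g₁ ω ≤ (i:ℝ) * δ := (div_le_iff₀ hδ).1 h1
      linarith
    · rw [ha]
      have h2' : (i:ℝ) * δ < (3 * g₁ ω / δ + 1) * δ := by
        exact (mul_lt_mul_iff_of_pos_right hδ).2 h2
      have h3 : (3 * g₁ ω / δ + 1) * δ = 3 * g₁ ω + δ := by field_simp
      nlinarith
  set rest : Ω → ℝ := (B \ Bi i).indicator g₁ with hrest
  have hrestm : BddMeas mG rest := bdd_indicator h₁ (hB.diff (hBim i))
  have hrest0 : ∀ ω ∈ Bi i, rest ω = 0 := by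
    intro ω hω
    exact Set.indicator_of_notMem (fun hc => hc.2 hω) _
  have e1 : B.indicator g₁ = (Bi i).indicator g₁ + rest := by
    funext ω
    by_cases hω : ω ∈ B
    · by_cases hω2 : ω ∈ Bi i
      · simp [Set.indicator_of_mem, hω, hω2, hrest, Set.indicator_of_notMem,
          Set.mem_diff, hrest0 ω hω2]
      · simp [Set.indicator_of_mem hω, Set.indicator_of_notMem hω2, hrest,
          Set.indicator_of_mem (Set.mem_diff_of_mem hω hω2)]
    · have : ω ∉ Bi i := fun hc => hω hc.1
      simp [Set.indicator_of_notMem, hω, this, hrest, Set.mem_diff]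
  have step1 : T (B.indicator g₁) ≤ T ((Bi i).indicator (fun _ => a) + rest) := by
    rw [e1]
    refine monoT hMo hPC (bdd_add (bdd_indicator h₁ (hBim i)) hrestm)
      (bdd_add (bdd_indicator_const a (hBim i)) hrestm) ?_
    intro ω
    simp only [Pi.add_apply]
    by_cases hω : ω ∈ Bi i
    · rw [Set.indicator_of_mem hω, Set.indicator_of_mem hω]
      linarith [(hval ω hω).1]
    · rw [Set.indicator_of_notMem hω, Set.indicator_of_notMem hω]
  have step2 : T ((Bi i).indicator (fun _ => a) + rest) <
      T ((Bi i).indicator (fun _ => a + δ/3) + rest) := by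
    have hrc : (Bi i)ᶜ.indicator rest = rest := by
      funext ω
      by_cases h : ω ∈ Bi i
      · simp [Set.indicator_of_notMem, h, hrest0 ω h]
      · simp [Set.indicator_of_mem, h]
    have := hMo a (a + δ/3) (by linarith) rest hrestm (Bi i) (hBim i) hBinn
    rwa [hrc] at this
  have step3 : T ((Bi i).indicator (fun _ => a + δ/3) + rest) ≤ T (B.indicator g₂) := by
    refine monoT hMo hPC (bdd_add (bdd_indicator_const _ (hBim i)) hrestm)
      (bdd_indicator h₂ hB) ?_
    intro ω
    simp only [Pi.add_apply]
    by_cases hω : ω ∈ Bi i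
    · rw [Set.indicator_of_mem hω, hrest0 ω hω, add_zero, Set.indicator_of_mem hω.1]
      have := (hval ω hω).2
      have := hgap ω hω.1
      linarith
    · rw [Set.indicator_of_notMem hω]
      by_cases hωB : ω ∈ B
      · rw [hrest, Set.indicator_of_mem (Set.mem_diff_of_mem hωB hω),
          Set.indicator_of_mem hωB]
        have := hgap ω hωB
        linarith
      · rw [hrest, Set.indicator_of_notMem (fun hc => hωB hc.1),
          Set.indicator_of_notMem hωB]
        simp
  calc T (B.indicator g₁) ≤ _ := step1
    _ < _ := step2
    _ ≤ _ := step3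

lemma uniqT (hT0 : T 0 = 0) (hMo : GMo mG T) (hPC : GPC mG T) {gh gt : Ω → ℝ}
    (hgh : BddMeas mG gh) (hgt : BddMeas mG gt)
    (heq : ∀ A : Set Ω, MeasurableSet[mG] A → T (A.indicator gh) = T (A.indicator gt)) :
    {ω | gh ω ≠ gt ω} ∈ NullG mG T := by
  classical
  set N1 : ℕ → Set Ω := fun n => {ω | gt ω + 1/((n:ℝ)+1) ≤ gh ω} with hN1
  set N2 : ℕ → Set Ω := fun n => {ω | gh ω + 1/((n:ℝ)+1) ≤ gt ω} with hN2
  have hmeas1 : ∀ n, MeasurableSet[mG] (N1 n) := by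
    intro n
    have : N1 n = (fun ω => gh ω - gt ω) ⁻¹' (Set.Ici (1/((n:ℝ)+1))) := by
      ext ω; simp [hN1, Set.mem_Ici]; constructor <;> intro h <;> linarith
    rw [this]
    exact (hgh.1.sub hgt.1) measurableSet_Ici
  have hmeas2 : ∀ n, MeasurableSet[mG] (N2 n) := by
    intro n
    have : N2 n = (fun ω => gt ω - gh ω) ⁻¹' (Set.Ici (1/((n:ℝ)+1))) := by
      ext ω; simp [hN2, Set.mem_Ici]; constructor <;> intro h <;> linarith
    rw [this]
    exact (hgt.1.sub hgh.1) measurableSet_Ici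
  have hpos : ∀ n : ℕ, (0:ℝ) < 1/((n:ℝ)+1) := fun n => by positivity
  have hnull1 : ∀ n, N1 n ∈ NullG mG T := by
    intro n
    by_contra hc
    have := gapLt hT0 hMo hPC (hmeas1 n) hc hgt hgh (hpos n) (fun ω hω => hω)
    rw [heq (N1 n) (hmeas1 n)] at this
    exact lt_irrefl _ this
  have hnull2 : ∀ n, N2 n ∈ NullG mG T := by
    intro n
    by_contra hc
    have := gapLt hT0 hMo hPC (hmeas2 n) hc hgh hgt (hpos n) (fun ω hω => hω)
    rw [heq (N2 n) (hmeas2 n)] at this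
    exact lt_irrefl _ this
  have hcover : {ω | gh ω ≠ gt ω} = ⋃ n, (N1 n ∪ N2 n) := by
    ext ω
    simp only [Set.mem_setOf_eq, Set.mem_iUnion, Set.mem_union]
    constructor
    · intro h
      have habs : 0 < |gh ω - gt ω| := abs_pos.2 (sub_ne_zero.2 h)
      obtain ⟨n, hn⟩ := exists_nat_one_div_lt habs
      rcases lt_or_gt_of_ne h with hc | hc
      · refine ⟨n, Or.inr ?_⟩
        simp only [hN2, Set.mem_setOf_eq]
        have he : |gh ω - gt ω| = gt ω - gh ω := by
          rw [abs_of_neg (by linarith)]; ring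
        rw [he] at hn
        linarith
      · refine ⟨n, Or.inl ?_⟩
        simp only [hN1, Set.mem_setOf_eq]
        have he : |gh ω - gt ω| = gh ω - gt ω := abs_of_pos (by linarith)
        rw [he] at hn
        linarith
    · rintro ⟨n, h | h⟩
      · simp only [hN1, Set.mem_setOf_eq] at h
        have := hpos n; intro hc; rw [hc] at h; linarith
      · simp only [hN2, Set.mem_setOf_eq] at h
        have := hpos n; intro hc; rw [hc] at h; linarith
  rw [hcover]
  exact null_iUnion hT0 hPC _ (fun n => null_union (hnull1 n) (hnull2 n))

end Uniq
/-- Hereditary sub-level class: on every `mG`-subset of `A`, the value of `f` is at most `x`. -/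
def SxP {Ω : Type*} (mG : MeasurableSpace Ω) (T : (Ω → ℝ) → ℝ) (f : Ω → ℝ)
    (x : ℝ) (A : Set Ω) : Prop :=
  MeasurableSet[mG] A ∧ ∀ B ⊆ A, MeasurableSet[mG] B →
    T (B.indicator f) ≤ T (B.indicator fun _ => x)

section Phi

variable {Ω : Type*} {mG : MeasurableSpace Ω} {T : (Ω → ℝ) → ℝ} {f : Ω → ℝ}

lemma phi_null (hT0 : T 0 = 0) {N : Set Ω} (hN : N ∈ NullG mG T) (x : ℝ) :
    T (N.indicator fun _ => x) = 0 := by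
  have h := hN.2 0 (fun _ => x) bdd_zero (bdd_const x)
  rw [zero_add] at h
  rw [h, hT0]

lemma Tf_null (hT0 : T 0 = 0) (hNB : GNB mG T f) {N : Set Ω} (hN : N ∈ NullG mG T) :
    T (N.indicator f) = 0 := by
  have h := hNB N hN.1
  have h1 := phi_null hT0 hN (supNorm f)
  have h2 := phi_null hT0 hN (-(supNorm f))
  rw [h1] at h
  rw [h2] at h
  linarith [h.1, h.2]

lemma phi_lt (hMo : GMo mG T) {A : Set Ω} (hA : MeasurableSet[mG] A)
    (hAn : A ∉ NullG mG T) {x y : ℝ} (hxy : x < y) :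
    T (A.indicator fun _ => x) < T (A.indicator fun _ => y) := by
  have h := hMo x y hxy (fun _ => 0) bdd_zero A hA hAn
  have e : Aᶜ.indicator (fun _ : Ω => (0:ℝ)) = 0 := by
    funext ω; simp [Set.indicator_apply]
  rw [e, add_zero, add_zero] at h
  exact h

lemma phi_mono (hMo : GMo mG T) (hPC : GPC mG T) {A : Set Ω}
    (hA : MeasurableSet[mG] A) {x y : ℝ} (hxy : x ≤ y) :
    T (A.indicator fun _ => x) ≤ T (A.indicator fun _ => y) := by
  refine monoT hMo hPC (bdd_indicator_const x hA) (bdd_indicator_const y hA) ?_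
  intro ω
  by_cases h : ω ∈ A
  · simp [Set.indicator_of_mem h, hxy]
  · simp [Set.indicator_of_notMem h]

lemma phi_cont (hPC : GPC mG T) {A : Set Ω} (hA : MeasurableSet[mG] A) :
    Continuous (fun x : ℝ => T (A.indicator fun _ => x)) := by
  refine SeqContinuous.continuous ?_
  intro u x hu
  obtain ⟨C, hC⟩ := (hu.abs).bddAbove_range
  have hCb : ∀ n, |u n| ≤ C := fun n => hC ⟨n, rfl⟩
  have hC0 : 0 ≤ C := (abs_nonneg (u 0)).trans (hCb 0)
  have := hPC (fun n => A.indicator fun _ => u n) (A.indicator fun _ => x)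
    (fun n => bdd_indicator_const (u n) hA) (bdd_indicator_const x hA)
    ⟨C, fun n ω => ?_⟩ (fun ω => ?_)
  · exact this
  · by_cases h : ω ∈ A
    · simp [Set.indicator_of_mem h, hCb n]
    · simp [Set.indicator_of_notMem h, hC0]
  · by_cases h : ω ∈ A
    · simp only [Set.indicator_of_mem h]; exact hu
    · simp only [Set.indicator_of_notMem h]; exact tendsto_const_nhds

lemma exCE (hPC : GPC mG T) (hNB : GNB mG T f) (hM : 0 < supNorm f)
    {A : Set Ω} (hA : MeasurableSet[mG] A) :
    ∃ c, -(supNorm f) ≤ c ∧ c ≤ supNorm f ∧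
      T (A.indicator fun _ => c) = T (A.indicator f) := by
  have h := hNB A hA
  have hsub := intermediate_value_Icc (show -(supNorm f) ≤ supNorm f by linarith)
    (phi_cont hPC hA).continuousOn
  obtain ⟨c, hc, hceq⟩ := hsub ⟨h.1, h.2⟩
  exact ⟨c, hc.1, hc.2, hceq⟩

lemma chooseLE (hT0 : T 0 = 0) (hMo : GMo mG T) (hPC : GPC mG T) (hNB : GNB mG T f)
    (hM : 0 < supNorm f) {A : Set Ω} (hA : MeasurableSet[mG] A) {x : ℝ}
    (hub : T (A.indicator f) ≤ T (A.indicator fun _ => x)) :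
    ∃ c, c ≤ x ∧ |c| ≤ supNorm f ⊔ |x| ∧
      T (A.indicator fun _ => c) = T (A.indicator f) := by
  by_cases hAn : A ∈ NullG mG T
  · refine ⟨min (-(supNorm f)) x, min_le_right _ _, ?_, ?_⟩
    · rcases min_cases (-(supNorm f)) x with ⟨h, _⟩ | ⟨h, _⟩
      · rw [h, abs_neg, abs_of_pos hM]; exact le_max_left _ _
      · rw [h]; exact le_max_right _ _
    · rw [phi_null hT0 hAn, Tf_null hT0 hNB hAn]
  · obtain ⟨c, hc1, hc2, hc3⟩ := exCE hPC hNB hM hA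
    refine ⟨c, ?_, ?_, hc3⟩
    · by_contra hcon
      push_neg at hcon
      have := phi_lt hMo hA hAn hcon
      rw [hc3] at this
      linarith
    · exact (abs_le.2 ⟨hc1, hc2⟩).trans (le_max_left _ _)

lemma chooseGE (hT0 : T 0 = 0) (hMo : GMo mG T) (hPC : GPC mG T) (hNB : GNB mG T f)
    (hM : 0 < supNorm f) {A : Set Ω} (hA : MeasurableSet[mG] A) {x : ℝ}
    (hlb : T (A.indicator fun _ => x) ≤ T (A.indicator f)) :
    ∃ c, x ≤ c ∧ |c| ≤ supNorm f ⊔ |x| ∧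
      T (A.indicator fun _ => c) = T (A.indicator f) := by
  by_cases hAn : A ∈ NullG mG T
  · refine ⟨max (supNorm f) x, le_max_right _ _, ?_, ?_⟩
    · rcases max_cases (supNorm f) x with ⟨h, _⟩ | ⟨h, _⟩
      · rw [h, abs_of_pos hM]; exact le_max_left _ _
      · rw [h]; exact le_max_right _ _
    · rw [phi_null hT0 hAn, Tf_null hT0 hNB hAn]
  · obtain ⟨c, hc1, hc2, hc3⟩ := exCE hPC hNB hM hA
    refine ⟨c, ?_, ?_, hc3⟩
    · by_contra hcon
      push_neg at hcon
      have := phi_lt hMo hA hAn hcon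
      rw [hc3] at this
      linarith
    · exact (abs_le.2 ⟨hc1, hc2⟩).trans (le_max_left _ _)

/-! ### The gauge `m` -/

lemma mMono (hMo : GMo mG T) (hPC : GPC mG T) (hM : 0 < supNorm f)
    {A A' : Set Ω} (hA : MeasurableSet[mG] A) (hA' : MeasurableSet[mG] A') (hsub : A ⊆ A') :
    T (A.indicator fun _ => supNorm f) - T (A.indicator fun _ => -(supNorm f)) ≤
      T (A'.indicator fun _ => supNorm f) - T (A'.indicator fun _ => -(supNorm f)) := by
  have h1 : T (A.indicator fun _ => supNorm f) ≤ T (A'.indicator fun _ => supNorm f) := by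
    refine monoT hMo hPC (bdd_indicator_const _ hA) (bdd_indicator_const _ hA') ?_
    intro ω
    by_cases h : ω ∈ A
    · simp [Set.indicator_of_mem h, Set.indicator_of_mem (hsub h)]
    · by_cases h' : ω ∈ A' <;>
        simp [Set.indicator_of_notMem h, Set.indicator_apply, h', le_of_lt hM]
  have h2 : T (A'.indicator fun _ => -(supNorm f)) ≤ T (A.indicator fun _ => -(supNorm f)) := by
    refine monoT hMo hPC (bdd_indicator_const _ hA') (bdd_indicator_const _ hA) ?_
    intro ω
    by_cases h : ω ∈ A
    · simp [Set.indicator_of_mem h, Set.indicator_of_mem (hsub h)]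
    · by_cases h' : ω ∈ A' <;>
        simp [Set.indicator_of_notMem h, Set.indicator_apply, h', le_of_lt hM]
  linarith

lemma mStrict (hMo : GMo mG T) (hPC : GPC mG T) (hM : 0 < supNorm f)
    {A D : Set Ω} (hA : MeasurableSet[mG] A) (hD : MeasurableSet[mG] D)
    (hdisj : A ∩ D = ∅) (hDn : D ∉ NullG mG T) :
    T (A.indicator fun _ => supNorm f) - T (A.indicator fun _ => -(supNorm f)) <
      T ((A ∪ D).indicator fun _ => supNorm f) -
        T ((A ∪ D).indicator fun _ => -(supNorm f)) := by
  have hnotin : ∀ ω ∈ D, ω ∉ A := by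
    intro ω hω hcA
    exact absurd (Set.mem_inter hcA hω) (by rw [hdisj]; exact Set.notMem_empty ω)
  have key : T (A.indicator fun _ => supNorm f) < T ((A ∪ D).indicator fun _ => supNorm f) := by
    have h := hMo 0 (supNorm f) hM (A.indicator fun _ => supNorm f)
      (bdd_indicator_const _ hA) D hD hDn
    have e0 : D.indicator (fun _ : Ω => (0:ℝ)) = 0 := by funext ω; simp [Set.indicator_apply]
    have e1 : Dᶜ.indicator (A.indicator fun _ : Ω => supNorm f) =
        A.indicator fun _ : Ω => supNorm f := by
      funext ω
      by_cases hω : ω ∈ D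
      · rw [Set.indicator_of_notMem (by simpa using hω), Set.indicator_of_notMem (hnotin ω hω)]
      · rw [Set.indicator_of_mem (by simpa using hω)]
    have e2 : D.indicator (fun _ : Ω => supNorm f) + A.indicator (fun _ : Ω => supNorm f) =
        (A ∪ D).indicator fun _ : Ω => supNorm f := by
      funext ω
      by_cases hω : ω ∈ D
      · rw [Pi.add_apply, Set.indicator_of_mem hω, Set.indicator_of_notMem (hnotin ω hω),
          Set.indicator_of_mem (Set.mem_union_right _ hω), add_zero]
      · by_cases hω' : ω ∈ A
        · rw [Pi.add_apply, Set.indicator_of_notMem hω, Set.indicator_of_mem hω',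
            Set.indicator_of_mem (Set.mem_union_left _ hω'), zero_add]
        · rw [Pi.add_apply, Set.indicator_of_notMem hω, Set.indicator_of_notMem hω',
            Set.indicator_of_notMem (by simp [hω, hω']), zero_add]
    rw [e0, e1, zero_add, e2] at h
    exact h
  have h2 : T ((A ∪ D).indicator fun _ => -(supNorm f)) ≤
      T (A.indicator fun _ => -(supNorm f)) := by
    refine monoT hMo hPC (bdd_indicator_const _ (hA.union hD)) (bdd_indicator_const _ hA) ?_
    intro ω
    by_cases h : ω ∈ A
    · simp [Set.indicator_of_mem h, Set.indicator_of_mem (Set.mem_union_left _ h)]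
    · by_cases h' : ω ∈ D <;>
        simp [Set.indicator_of_notMem h, Set.indicator_apply, h', h, le_of_lt hM]
  linarith

end Phi
section Sx

variable {Ω : Type*} {mG : MeasurableSpace Ω} {T : (Ω → ℝ) → ℝ} {f : Ω → ℝ}

lemma sx_mono (hMo : GMo mG T) (hPC : GPC mG T) {x y : ℝ} (hxy : x ≤ y) {A : Set Ω}
    (h : SxP mG T f x A) : SxP mG T f y A :=
  ⟨h.1, fun B hBsub hB => (h.2 B hBsub hB).trans (phi_mono hMo hPC hB hxy)⟩

lemma sx_empty (hT0 : T 0 = 0) (x : ℝ) : SxP mG T f x (∅ : Set Ω) := by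
  refine ⟨MeasurableSet.empty, fun B hBsub hB => ?_⟩
  rw [Set.subset_empty_iff] at hBsub
  subst hBsub
  simp [hT0]

lemma sx_null (hT0 : T 0 = 0) (hNB : GNB mG T f) {N : Set Ω} (hN : N ∈ NullG mG T)
    (x : ℝ) : SxP mG T f x N := by
  refine ⟨hN.1, fun B hBsub hB => ?_⟩
  have hBn : B ∈ NullG mG T := null_subset hN hB hBsub
  rw [Tf_null hT0 hNB hBn, phi_null hT0 hBn]

lemma sx_union (hT0 : T 0 = 0) (hMo : GMo mG T) (hPC : GPC mG T) (hPS : GPS mG T f)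
    (hNB : GNB mG T f) (hM : 0 < supNorm f) {x : ℝ} {A₁ A₂ : Set Ω}
    (h₁ : SxP mG T f x A₁) (h₂ : SxP mG T f x A₂) : SxP mG T f x (A₁ ∪ A₂) := by
  refine ⟨h₁.1.union h₂.1, fun B hBsub hB => ?_⟩
  set B₁ : Set Ω := B ∩ A₁ with hB₁
  set B₂ : Set Ω := B \ A₁ with hB₂
  have hB₁m : MeasurableSet[mG] B₁ := hB.inter h₁.1
  have hB₂m : MeasurableSet[mG] B₂ := hB.diff h₁.1
  have hub₁ : T (B₁.indicator f) ≤ T (B₁.indicator fun _ => x) :=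
    h₁.2 B₁ Set.inter_subset_right hB₁m
  have hub₂ : T (B₂.indicator f) ≤ T (B₂.indicator fun _ => x) :=
    h₂.2 B₂ (fun ω hω => (hBsub hω.1).resolve_left hω.2) hB₂m
  obtain ⟨c₁, hc₁x, hc₁b, hc₁e⟩ := chooseLE hT0 hMo hPC hNB hM hB₁m hub₁
  obtain ⟨c₂, hc₂x, hc₂b, hc₂e⟩ := chooseLE hT0 hMo hPC hNB hM hB₂m hub₂
  have hdisj : Disjoint B₁ B₂ := Set.disjoint_left.2 (fun ω h1 h2 => h2.2 h1.2)
  have hm₁ : ∀ {ω}, ω ∈ B → ω ∈ A₁ → ω ∈ B₁ := fun h1 h2 => Set.mem_inter h1 h2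
  have hm₂ : ∀ {ω}, ω ∈ B → ω ∉ A₁ → ω ∈ B₂ := fun h1 h2 => ⟨h1, h2⟩
  have hn₁ : ∀ {ω}, ω ∉ A₁ → ω ∉ B₁ := fun h hc => h hc.2
  have hn₁' : ∀ {ω}, ω ∉ B → ω ∉ B₁ := fun h hc => h hc.1
  have hn₂ : ∀ {ω}, ω ∈ A₁ → ω ∉ B₂ := fun h hc => hc.2 h
  have hn₂' : ∀ {ω}, ω ∉ B → ω ∉ B₂ := fun h hc => h hc.1
  have hps := hPS B₁ B₂ hB₁m hB₂m hdisj c₁ c₂ hc₁e.symm hc₂e.symm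
  have eB : B₁.indicator f + B₂.indicator f = B.indicator f := by
    funext ω
    by_cases hω : ω ∈ B
    · by_cases hω1 : ω ∈ A₁
      · rw [Pi.add_apply, Set.indicator_of_mem (hm₁ hω hω1),
          Set.indicator_of_notMem (hn₂ hω1), Set.indicator_of_mem hω, add_zero]
      · rw [Pi.add_apply, Set.indicator_of_notMem (hn₁ hω1),
          Set.indicator_of_mem (hm₂ hω hω1), Set.indicator_of_mem hω, zero_add]
    · rw [Pi.add_apply, Set.indicator_of_notMem (hn₁' hω),
        Set.indicator_of_notMem (hn₂' hω), Set.indicator_of_notMem hω, add_zero]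
  rw [eB] at hps
  rw [hps]
  refine monoT hMo hPC
    (bdd_add (bdd_indicator_const c₁ hB₁m) (bdd_indicator_const c₂ hB₂m))
    (bdd_indicator_const x hB) ?_
  intro ω
  by_cases hω : ω ∈ B
  · by_cases hω1 : ω ∈ A₁
    · rw [Pi.add_apply, Set.indicator_of_mem (hm₁ hω hω1),
        Set.indicator_of_notMem (hn₂ hω1), Set.indicator_of_mem hω, add_zero]
      exact hc₁x
    · rw [Pi.add_apply, Set.indicator_of_notMem (hn₁ hω1),
        Set.indicator_of_mem (hm₂ hω hω1), Set.indicator_of_mem hω, zero_add]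
      exact hc₂x
  · rw [Pi.add_apply, Set.indicator_of_notMem (hn₁' hω),
      Set.indicator_of_notMem (hn₂' hω), Set.indicator_of_notMem hω, add_zero]

lemma sx_iUnion (hT0 : T 0 = 0) (hMo : GMo mG T) (hPC : GPC mG T) (hPS : GPS mG T f)
    (hNB : GNB mG T f) (hM : 0 < supNorm f) {x : ℝ} (e : ℕ → Set Ω)
    (he : ∀ n, SxP mG T f x (e n)) : SxP mG T f x (⋃ n, e n) := by
  set E : ℕ → Set Ω := fun n => ⋃ i ∈ Finset.range (n+1), e i with hEdef
  have hEsx : ∀ n, SxP mG T f x (E n) := by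
    intro n
    induction n with
    | zero => simpa [hEdef] using he 0
    | succ n ih =>
        have hstep : E (n+1) = E n ∪ e (n+1) := by
          rw [hEdef]
          simp only [Finset.range_add_one (n := n+1), Finset.set_biUnion_insert]
          rw [Set.union_comm]
        rw [hstep]
        exact sx_union hT0 hMo hPC hPS hNB hM ih (he (n+1))
  have hEmono : ∀ k n, k ≤ n → e k ⊆ E n := by
    intro k n hkn ω hω
    exact Set.mem_biUnion (Finset.mem_range.2 (Nat.lt_succ_of_le hkn)) hω
  refine ⟨MeasurableSet.iUnion (fun n => (he n).1), fun B hBsub hB => ?_⟩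
  set M : ℝ := supNorm f with hMdef
  set Bn : ℕ → Set Ω := fun n => B ∩ E n with hBn
  set Rn : ℕ → Set Ω := fun n => B \ E n with hRn
  have hBnm : ∀ n, MeasurableSet[mG] (Bn n) := fun n => hB.inter (hEsx n).1
  have hRnm : ∀ n, MeasurableSet[mG] (Rn n) := fun n => hB.diff (hEsx n).1
  have hmB : ∀ (n:ℕ) {ω}, ω ∈ B → ω ∈ E n → ω ∈ Bn n := fun n {ω} h1 h2 => Set.mem_inter h1 h2
  have hmR : ∀ (n:ℕ) {ω}, ω ∈ B → ω ∉ E n → ω ∈ Rn n := fun n {ω} h1 h2 => ⟨h1, h2⟩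
  have hnB : ∀ (n:ℕ) {ω}, ω ∉ E n → ω ∉ Bn n := fun n {ω} h hc => h hc.2
  have hnB' : ∀ (n:ℕ) {ω}, ω ∉ B → ω ∉ Bn n := fun n {ω} h hc => h hc.1
  have hnR : ∀ (n:ℕ) {ω}, ω ∈ E n → ω ∉ Rn n := fun n {ω} h hc => hc.2 h
  have hnR' : ∀ (n:ℕ) {ω}, ω ∉ B → ω ∉ Rn n := fun n {ω} h hc => h hc.1
  have key : ∀ n, T (B.indicator f) ≤
      T ((Bn n).indicator (fun _ => x) + (Rn n).indicator (fun _ => M ⊔ x)) := by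
    intro n
    have hub : T ((Bn n).indicator f) ≤ T ((Bn n).indicator fun _ => x) :=
      (hEsx n).2 (Bn n) Set.inter_subset_right (hBnm n)
    obtain ⟨c, hcx, hcb, hce⟩ := chooseLE hT0 hMo hPC hNB hM (hBnm n) hub
    obtain ⟨d, hd1, hd2, hde⟩ := exCE hPC hNB hM (hRnm n)
    have hdisj : Disjoint (Bn n) (Rn n) := Set.disjoint_left.2 (fun ω h1 h2 => h2.2 h1.2)
    have hps := hPS (Bn n) (Rn n) (hBnm n) (hRnm n) hdisj c d hce.symm hde.symm
    have eB : (Bn n).indicator f + (Rn n).indicator f = B.indicator f := by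
      funext ω
      by_cases hω : ω ∈ B
      · by_cases hω1 : ω ∈ E n
        · rw [Pi.add_apply, Set.indicator_of_mem (hmB n hω hω1),
            Set.indicator_of_notMem (hnR n hω1), Set.indicator_of_mem hω, add_zero]
        · rw [Pi.add_apply, Set.indicator_of_notMem (hnB n hω1),
            Set.indicator_of_mem (hmR n hω hω1), Set.indicator_of_mem hω, zero_add]
      · rw [Pi.add_apply, Set.indicator_of_notMem (hnB' n hω),
          Set.indicator_of_notMem (hnR' n hω), Set.indicator_of_notMem hω, add_zero]
    rw [eB] at hps
    rw [hps]
    refine monoT hMo hPC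
      (bdd_add (bdd_indicator_const c (hBnm n)) (bdd_indicator_const d (hRnm n)))
      (bdd_add (bdd_indicator_const x (hBnm n)) (bdd_indicator_const _ (hRnm n))) ?_
    intro ω
    simp only [Pi.add_apply]
    by_cases h1 : ω ∈ Bn n
    · rw [Set.indicator_of_mem h1, Set.indicator_of_mem h1,
        Set.indicator_of_notMem (hnR n h1.2),
        Set.indicator_of_notMem (hnR n h1.2)]
      simpa using hcx
    · by_cases h2 : ω ∈ Rn n
      · rw [Set.indicator_of_notMem h1, Set.indicator_of_notMem h1,
          Set.indicator_of_mem h2, Set.indicator_of_mem h2]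
        simp only [zero_add]
        exact hd2.trans (le_max_left _ _)
      · rw [Set.indicator_of_notMem h1, Set.indicator_of_notMem h1,
          Set.indicator_of_notMem h2, Set.indicator_of_notMem h2]
  -- now take the limit
  have hlim : Tendsto (fun n => T ((Bn n).indicator (fun _ => x) +
      (Rn n).indicator (fun _ => M ⊔ x))) atTop (𝓝 (T (B.indicator fun _ => x))) := by
    refine hPC _ _ (fun n => bdd_add (bdd_indicator_const x (hBnm n))
      (bdd_indicator_const _ (hRnm n))) (bdd_indicator_const x hB)
      ⟨|x| + (M ⊔ |x|), fun n ω => ?_⟩ (fun ω => ?_)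
    · have h1 : |(Bn n).indicator (fun _ => x) ω| ≤ |x| := by
        by_cases h : ω ∈ Bn n
        · simp [Set.indicator_of_mem h]
        · simp [Set.indicator_of_notMem h]
      have h2 : |(Rn n).indicator (fun _ => M ⊔ x) ω| ≤ M ⊔ |x| := by
        by_cases h : ω ∈ Rn n
        · rw [Set.indicator_of_mem h]
          have : |M ⊔ x| = M ⊔ x := abs_of_pos (lt_max_iff.2 (Or.inl hM))
          rw [this]
          exact max_le_max (le_refl M) (le_abs_self x)
        · rw [Set.indicator_of_notMem h]
          simp only [abs_zero]
          exact le_max_iff.2 (Or.inl hM.le)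
      calc |((Bn n).indicator (fun _ => x) + (Rn n).indicator (fun _ => M ⊔ x)) ω|
          ≤ |(Bn n).indicator (fun _ => x) ω| + |(Rn n).indicator (fun _ => M ⊔ x) ω| :=
            abs_add_le _ _
        _ ≤ |x| + (M ⊔ |x|) := add_le_add h1 h2
    · by_cases hω : ω ∈ B
      · obtain ⟨k, hk⟩ := Set.mem_iUnion.1 (hBsub hω)
        have hev : ∀ n ≥ k, ((Bn n).indicator (fun _ => x) +
            (Rn n).indicator (fun _ => M ⊔ x)) ω = (B.indicator fun _ => x) ω := by
          intro n hn
          have hωE : ω ∈ E n := hEmono k n hn hk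
          rw [Pi.add_apply, Set.indicator_of_mem (hmB n hω hωE),
            Set.indicator_of_notMem (hnR n hωE),
            Set.indicator_of_mem hω, add_zero]
        exact tendsto_const_nhds.congr'
          (eventually_atTop.2 ⟨k, fun n hn => (hev n hn).symm⟩)
      · have hev : ∀ n, ((Bn n).indicator (fun _ => x) +
            (Rn n).indicator (fun _ => M ⊔ x)) ω = (B.indicator fun _ => x) ω := by
          intro n
          rw [Pi.add_apply, Set.indicator_of_notMem (hnB' n hω),
            Set.indicator_of_notMem (hnR' n hω),
            Set.indicator_of_notMem hω, add_zero]
        simp only [hev]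
        exact tendsto_const_nhds
  exact ge_of_tendsto' hlim key

lemma sx_countable {ι : Type*} [Countable ι] (hT0 : T 0 = 0) (hMo : GMo mG T)
    (hPC : GPC mG T) (hPS : GPS mG T f) (hNB : GNB mG T f) (hM : 0 < supNorm f)
    {x : ℝ} (e : ι → Set Ω) (he : ∀ i, SxP mG T f x (e i)) : SxP mG T f x (⋃ i, e i) := by
  cases isEmpty_or_nonempty ι
  · rw [Set.iUnion_of_empty]
    exact sx_empty hT0 x
  · obtain ⟨g, hg⟩ := exists_surjective_nat ι
    rw [← hg.iUnion_comp e]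
    exact sx_iUnion hT0 hMo hPC hPS hNB hM _ (fun n => he (g n))

lemma maxSx (hT0 : T 0 = 0) (hMo : GMo mG T) (hPC : GPC mG T) (hPS : GPS mG T f)
    (hNB : GNB mG T f) (hM : 0 < supNorm f) (x : ℝ) :
    ∃ C : Set Ω, SxP mG T f x C ∧
      ∀ A', SxP mG T f x A' → (A' \ C) ∈ NullG mG T := by
  classical
  set M : ℝ := supNorm f with hMdef
  set mm : Set Ω → ℝ := fun A =>
    T (A.indicator fun _ => M) - T (A.indicator fun _ => -M) with hmm
  set S : Set ℝ := mm '' {A | SxP mG T f x A} with hS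
  have hSne : S.Nonempty := ⟨mm ∅, ⟨∅, sx_empty hT0 x, rfl⟩⟩
  have hSbdd : BddAbove S := by
    refine ⟨mm Set.univ, fun r hr => ?_⟩
    obtain ⟨A, hA, rfl⟩ := hr
    exact mMono hMo hPC hM hA.1 MeasurableSet.univ (Set.subset_univ A)
  set s : ℝ := sSup S with hs
  have hchoice : ∀ n : ℕ, ∃ A, SxP mG T f x A ∧ s - 1/((n:ℝ)+1) < mm A := by
    intro n
    have hlt : s - 1/((n:ℝ)+1) < s := by
      have : (0:ℝ) < 1/((n:ℝ)+1) := by positivity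
      linarith
    obtain ⟨r, hrS, hrlt⟩ := exists_lt_of_lt_csSup hSne hlt
    obtain ⟨A, hA, rfl⟩ := hrS
    exact ⟨A, hA, hrlt⟩
  choose Aseq hAseq hAlt using hchoice
  set C : Set Ω := ⋃ n, Aseq n with hC
  have hCsx : SxP mG T f x C := sx_iUnion hT0 hMo hPC hPS hNB hM Aseq hAseq
  have hCub : ∀ n, mm (Aseq n) ≤ mm C := fun n =>
    mMono hMo hPC hM (hAseq n).1 hCsx.1 (Set.subset_iUnion Aseq n)
  have hCge : s ≤ mm C := by
    by_contra hcon
    push_neg at hcon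
    obtain ⟨n, hn⟩ := exists_nat_one_div_lt (show (0:ℝ) < s - mm C by linarith)
    have h1 := hAlt n
    have h2 := hCub n
    clear_value mm s
    linarith
  refine ⟨C, hCsx, fun A' hA' => ?_⟩
  have hUsx : SxP mG T f x (C ∪ A') := sx_union hT0 hMo hPC hPS hNB hM hCsx hA'
  have hUle : mm (C ∪ A') ≤ s := le_csSup hSbdd ⟨C ∪ A', hUsx, rfl⟩
  by_contra hDn
  have hDm : MeasurableSet[mG] (A' \ C) := hA'.1.diff hCsx.1
  have hdisj : C ∩ (A' \ C) = ∅ := by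
    ext ω; simp only [Set.mem_inter_iff, Set.mem_diff, Set.mem_empty_iff_false, iff_false]
    rintro ⟨h1, _, h3⟩; exact h3 h1
  have hstrict := mStrict hMo hPC hM hCsx.1 hDm hdisj hDn
  have hUeq : C ∪ (A' \ C) = C ∪ A' := Set.union_diff_self
  rw [hUeq] at hstrict
  have h2 : mm C < mm (C ∪ A') := hstrict
  clear_value mm s
  linarith

end Sx
/-- The gauge used for exhaustion arguments. -/
noncomputable def gaugeM {Ω : Type*} (T : (Ω → ℝ) → ℝ) (f : Ω → ℝ) (A : Set Ω) : ℝ :=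
  T (A.indicator fun _ => supNorm f) - T (A.indicator fun _ => -(supNorm f))

section Dicho

variable {Ω : Type*} {mG : MeasurableSpace Ω} {T : (Ω → ℝ) → ℝ} {f : Ω → ℝ}

lemma geUnion (hT0 : T 0 = 0) (hMo : GMo mG T) (hPC : GPC mG T) (hPS : GPS mG T f)
    (hNB : GNB mG T f) (hM : 0 < supNorm f) {x : ℝ} {V E : Set Ω}
    (hVm : MeasurableSet[mG] V) (hEm : MeasurableSet[mG] E) (hdisj : V ∩ E = ∅)
    (h1 : T (V.indicator fun _ => x) ≤ T (V.indicator f))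
    (h2 : T (E.indicator fun _ => x) ≤ T (E.indicator f)) :
    T ((V ∪ E).indicator fun _ => x) ≤ T ((V ∪ E).indicator f) := by
  obtain ⟨cV, hcVx, hcVb, hcVe⟩ := chooseGE hT0 hMo hPC hNB hM hVm h1
  obtain ⟨cE, hcEx, hcEb, hcEe⟩ := chooseGE hT0 hMo hPC hNB hM hEm h2
  have hVE : ∀ {ω}, ω ∈ V → ω ∉ E := by
    intro ω h1 h2
    exact absurd (Set.mem_inter h1 h2) (by rw [hdisj]; exact Set.notMem_empty ω)
  have hDisj : Disjoint V E := Set.disjoint_left.2 (fun ω hω => hVE hω)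
  have hps := hPS V E hVm hEm hDisj cV cE hcVe.symm hcEe.symm
  have eB : V.indicator f + E.indicator f = (V ∪ E).indicator f := by
    funext ω
    by_cases h1 : ω ∈ V
    · rw [Pi.add_apply, Set.indicator_of_mem h1, Set.indicator_of_notMem (hVE h1),
        Set.indicator_of_mem (Set.mem_union_left _ h1), add_zero]
    · by_cases h2 : ω ∈ E
      · rw [Pi.add_apply, Set.indicator_of_notMem h1, Set.indicator_of_mem h2,
          Set.indicator_of_mem (Set.mem_union_right _ h2), zero_add]
      · rw [Pi.add_apply, Set.indicator_of_notMem h1, Set.indicator_of_notMem h2,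
          Set.indicator_of_notMem (by simp [h1, h2]), add_zero]
  rw [eB] at hps
  rw [hps]
  refine monoT hMo hPC (bdd_indicator_const x (hVm.union hEm))
    (bdd_add (bdd_indicator_const cV hVm) (bdd_indicator_const cE hEm)) ?_
  intro ω
  by_cases h1 : ω ∈ V
  · rw [Set.indicator_of_mem (Set.mem_union_left _ h1), Pi.add_apply,
      Set.indicator_of_mem h1, Set.indicator_of_notMem (hVE h1), add_zero]
    exact hcVx
  · by_cases h2 : ω ∈ E
    · rw [Set.indicator_of_mem (Set.mem_union_right _ h2), Pi.add_apply,
        Set.indicator_of_notMem h1, Set.indicator_of_mem h2, zero_add]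
      exact hcEx
    · rw [Set.indicator_of_notMem (by simp [h1, h2]), Pi.add_apply,
        Set.indicator_of_notMem h1, Set.indicator_of_notMem h2, add_zero]

lemma tend_ind_const (hPC : GPC mG T) {V : ℕ → Set Ω} (hmono : ∀ n, V n ⊆ V (n+1))
    (hmeas : ∀ n, MeasurableSet[mG] (V n)) (c : ℝ) :
    Tendsto (fun n => T ((V n).indicator fun _ => c)) atTop
      (𝓝 (T ((⋃ n, V n).indicator fun _ => c))) := by
  have hmono' : ∀ k n, k ≤ n → V k ⊆ V n := fun k n h =>
    (monotone_nat_of_le_succ hmono) h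
  refine hPC _ _ (fun n => bdd_indicator_const c (hmeas n))
    (bdd_indicator_const c (MeasurableSet.iUnion hmeas)) ⟨|c|, fun n ω => ?_⟩ (fun ω => ?_)
  · by_cases h : ω ∈ V n
    · simp [Set.indicator_of_mem h]
    · simp [Set.indicator_of_notMem h]
  · by_cases h : ω ∈ ⋃ n, V n
    · obtain ⟨k, hk⟩ := Set.mem_iUnion.1 h
      have hev : ∀ n ≥ k, (V n).indicator (fun _ => c) ω = (⋃ n, V n).indicator (fun _ => c) ω := by
        intro n hn
        rw [Set.indicator_of_mem (hmono' k n hn hk), Set.indicator_of_mem h]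
      exact tendsto_const_nhds.congr' (eventually_atTop.2 ⟨k, fun n hn => (hev n hn).symm⟩)
    · have hev : ∀ n, (V n).indicator (fun _ => c) ω = (⋃ n, V n).indicator (fun _ => c) ω := by
        intro n
        rw [Set.indicator_of_notMem (fun hc => h (Set.mem_iUnion.2 ⟨n, hc⟩)),
          Set.indicator_of_notMem h]
      simp only [hev]
      exact tendsto_const_nhds

lemma tend_gauge (hPC : GPC mG T) {V : ℕ → Set Ω} (hmono : ∀ n, V n ⊆ V (n+1))
    (hmeas : ∀ n, MeasurableSet[mG] (V n)) :
    Tendsto (fun n => gaugeM T f (V n)) atTop (𝓝 (gaugeM T f (⋃ n, V n))) :=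
  (tend_ind_const hPC hmono hmeas (supNorm f)).sub
    (tend_ind_const hPC hmono hmeas (-(supNorm f)))

lemma geIUnionMono (hT0 : T 0 = 0) (hMo : GMo mG T) (hPC : GPC mG T) (hPS : GPS mG T f)
    (hNB : GNB mG T f) (hM : 0 < supNorm f) {x : ℝ} {V : ℕ → Set Ω}
    (hmono : ∀ n, V n ⊆ V (n+1)) (hmeas : ∀ n, MeasurableSet[mG] (V n))
    (hge : ∀ n, T ((V n).indicator fun _ => x) ≤ T ((V n).indicator f)) :
    T ((⋃ n, V n).indicator fun _ => x) ≤ T ((⋃ n, V n).indicator f) := by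
  set M : ℝ := supNorm f with hMdef
  set W : Set Ω := ⋃ n, V n with hW
  have hWm : MeasurableSet[mG] W := MeasurableSet.iUnion hmeas
  have hVW : ∀ n, V n ⊆ W := fun n => Set.subset_iUnion V n
  have hRm : ∀ n, MeasurableSet[mG] (W \ V n) := fun n => hWm.diff (hmeas n)
  have key : ∀ n, T ((V n).indicator (fun _ => x) +
      (W \ V n).indicator (fun _ => -(M ⊔ |x|))) ≤ T (W.indicator f) := by
    intro n
    obtain ⟨c, hcx, hcb, hce⟩ := chooseGE hT0 hMo hPC hNB hM (hmeas n) (hge n)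
    obtain ⟨d, hd1, hd2, hde⟩ := exCE hPC hNB hM (hRm n)
    have hDisj : Disjoint (V n) (W \ V n) :=
      Set.disjoint_left.2 (fun ω h1 h2 => h2.2 h1)
    have hps := hPS (V n) (W \ V n) (hmeas n) (hRm n) hDisj c d hce.symm hde.symm
    have eB : (V n).indicator f + (W \ V n).indicator f = W.indicator f := by
      funext ω
      by_cases h1 : ω ∈ V n
      · rw [Pi.add_apply, Set.indicator_of_mem h1,
          Set.indicator_of_notMem (fun hc : ω ∈ W \ V n => hc.2 h1),
          Set.indicator_of_mem (hVW n h1), add_zero]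
      · by_cases h2 : ω ∈ W
        · rw [Pi.add_apply, Set.indicator_of_notMem h1,
            Set.indicator_of_mem (show ω ∈ W \ V n from ⟨h2, h1⟩),
            Set.indicator_of_mem h2, zero_add]
        · rw [Pi.add_apply, Set.indicator_of_notMem h1,
            Set.indicator_of_notMem (fun hc : ω ∈ W \ V n => h2 hc.1),
            Set.indicator_of_notMem h2, add_zero]
    rw [eB] at hps
    rw [hps]
    refine monoT hMo hPC
      (bdd_add (bdd_indicator_const x (hmeas n)) (bdd_indicator_const _ (hRm n)))
      (bdd_add (bdd_indicator_const c (hmeas n)) (bdd_indicator_const d (hRm n))) ?_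
    intro ω
    simp only [Pi.add_apply]
    by_cases h1 : ω ∈ V n
    · rw [Set.indicator_of_mem h1, Set.indicator_of_mem h1,
        Set.indicator_of_notMem (fun hc : ω ∈ W \ V n => hc.2 h1),
        Set.indicator_of_notMem (fun hc : ω ∈ W \ V n => hc.2 h1)]
      simpa using hcx
    · by_cases h2 : ω ∈ W \ V n
      · rw [Set.indicator_of_notMem h1, Set.indicator_of_notMem h1,
          Set.indicator_of_mem h2, Set.indicator_of_mem h2]
        simp only [zero_add]
        have : -(M ⊔ |x|) ≤ -M := by
          simp only [neg_le_neg_iff]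
          exact le_max_left _ _
        linarith
      · rw [Set.indicator_of_notMem h1, Set.indicator_of_notMem h1,
          Set.indicator_of_notMem h2, Set.indicator_of_notMem h2]
  have hlim : Tendsto (fun n => T ((V n).indicator (fun _ => x) +
      (W \ V n).indicator (fun _ => -(M ⊔ |x|)))) atTop (𝓝 (T (W.indicator fun _ => x))) := by
    refine hPC _ _ (fun n => bdd_add (bdd_indicator_const x (hmeas n))
      (bdd_indicator_const _ (hRm n))) (bdd_indicator_const x hWm)
      ⟨|x| + (M ⊔ |x|), fun n ω => ?_⟩ (fun ω => ?_)
    · have h1 : |(V n).indicator (fun _ => x) ω| ≤ |x| := by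
        by_cases h : ω ∈ V n
        · simp [Set.indicator_of_mem h]
        · simp [Set.indicator_of_notMem h]
      have h2 : |(W \ V n).indicator (fun _ => -(M ⊔ |x|)) ω| ≤ M ⊔ |x| := by
        by_cases h : ω ∈ W \ V n
        · rw [Set.indicator_of_mem h, abs_neg, abs_of_pos (lt_max_iff.2 (Or.inl hM))]
        · rw [Set.indicator_of_notMem h]
          simp only [abs_zero]
          exact le_max_iff.2 (Or.inl hM.le)
      calc |((V n).indicator (fun _ => x) + (W \ V n).indicator (fun _ => -(M ⊔ |x|))) ω|
          ≤ _ + _ := abs_add_le _ _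
        _ ≤ |x| + (M ⊔ |x|) := add_le_add h1 h2
    · have hmono' : ∀ k n, k ≤ n → V k ⊆ V n := fun k n h =>
        (monotone_nat_of_le_succ hmono) h
      by_cases hω : ω ∈ W
      · obtain ⟨k, hk⟩ := Set.mem_iUnion.1 hω
        have hev : ∀ n ≥ k, ((V n).indicator (fun _ => x) +
            (W \ V n).indicator (fun _ => -(M ⊔ |x|))) ω = (W.indicator fun _ => x) ω := by
          intro n hn
          rw [Pi.add_apply, Set.indicator_of_mem (hmono' k n hn hk),
            Set.indicator_of_notMem (fun hc : ω ∈ W \ V n => hc.2 (hmono' k n hn hk)),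
            Set.indicator_of_mem hω, add_zero]
        exact tendsto_const_nhds.congr' (eventually_atTop.2 ⟨k, fun n hn => (hev n hn).symm⟩)
      · have hev : ∀ n, ((V n).indicator (fun _ => x) +
            (W \ V n).indicator (fun _ => -(M ⊔ |x|))) ω = (W.indicator fun _ => x) ω := by
          intro n
          rw [Pi.add_apply, Set.indicator_of_notMem (fun hc => hω (hVW n hc)),
            Set.indicator_of_notMem (fun hc : ω ∈ W \ V n => hω hc.1),
            Set.indicator_of_notMem hω, add_zero]
        simp only [hev]
        exact tendsto_const_nhds
  exact le_of_tendsto' hlim key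

end Dicho
section Dicho2

variable {Ω : Type*} {mG : MeasurableSpace Ω} {T : (Ω → ℝ) → ℝ} {f : Ω → ℝ}

lemma dichotomy (hT0 : T 0 = 0) (hMo : GMo mG T) (hPC : GPC mG T) (hPS : GPS mG T f)
    (hNB : GNB mG T f) (hM : 0 < supNorm f) {x : ℝ} {C : Set Ω}
    (hCsx : SxP mG T f x C)
    (hmax : ∀ A', SxP mG T f x A' → A' \ C ∈ NullG mG T)
    {B : Set Ω} (hB : MeasurableSet[mG] B) (hBC : B ∩ C = ∅) :
    T (B.indicator fun _ => x) ≤ T (B.indicator f) := by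
  classical
  by_contra hcon
  push_neg at hcon
  -- no non-null subset of B lies in the class Sx
  have hstar : ∀ D, D ⊆ B → SxP mG T f x D → D ∈ NullG mG T := by
    intro D hDB hDsx
    have h := hmax D hDsx
    have hDC : D \ C = D := by
      ext ω
      constructor
      · exact fun h => h.1
      · intro hω
        refine ⟨hω, fun hc => ?_⟩
        exact absurd (Set.mem_inter (hDB hω) hc)
          (by rw [hBC]; exact Set.notMem_empty ω)
    rwa [hDC] at h
  have hss : ∀ R, R ⊆ B → MeasurableSet[mG] R → R ∉ NullG mG T →
      ∃ E, E ⊆ R ∧ MeasurableSet[mG] E ∧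
        T (E.indicator fun _ => x) < T (E.indicator f) := by
    intro R hRB hRm hRn
    by_contra hc
    push_neg at hc
    refine hRn (hstar R hRB ⟨hRm, fun E hE hEm => ?_⟩)
    exact hc E hE hEm
  have hdagger : ∀ V, V ⊆ B → MeasurableSet[mG] V →
      T (V.indicator fun _ => x) ≤ T (V.indicator f) → (B \ V) ∉ NullG mG T := by
    intro V hVB hVm hVge hnull
    obtain ⟨c, hcx, hcb, hce⟩ := chooseGE hT0 hMo hPC hNB hM hVm hVge
    have hRm : MeasurableSet[mG] (B \ V) := hB.diff hVm
    have hfe : T ((B \ V).indicator fun _ => c) = T ((B \ V).indicator f) := by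
      rw [Tf_null hT0 hNB hnull, phi_null hT0 hnull]
    have hDisj : Disjoint V (B \ V) := Set.disjoint_left.2 (fun ω h1 h2 => h2.2 h1)
    have hps := hPS V (B \ V) hVm hRm hDisj c c hce.symm hfe.symm
    have eB : V.indicator f + (B \ V).indicator f = B.indicator f := by
      funext ω
      by_cases h1 : ω ∈ V
      · rw [Pi.add_apply, Set.indicator_of_mem h1,
          Set.indicator_of_notMem (fun hc2 : ω ∈ B \ V => hc2.2 h1),
          Set.indicator_of_mem (hVB h1), add_zero]
      · by_cases h2 : ω ∈ B
        · rw [Pi.add_apply, Set.indicator_of_notMem h1,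
            Set.indicator_of_mem (show ω ∈ B \ V from ⟨h2, h1⟩),
            Set.indicator_of_mem h2, zero_add]
        · rw [Pi.add_apply, Set.indicator_of_notMem h1,
            Set.indicator_of_notMem (fun hc2 : ω ∈ B \ V => h2 hc2.1),
            Set.indicator_of_notMem h2, add_zero]
    have eC : (V.indicator fun _ : Ω => c) + (B \ V).indicator (fun _ => c) =
        B.indicator (fun _ => c) := by
      funext ω
      by_cases h1 : ω ∈ V
      · rw [Pi.add_apply, Set.indicator_of_mem h1,
          Set.indicator_of_notMem (fun hc2 : ω ∈ B \ V => hc2.2 h1),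
          Set.indicator_of_mem (hVB h1), add_zero]
      · by_cases h2 : ω ∈ B
        · rw [Pi.add_apply, Set.indicator_of_notMem h1,
            Set.indicator_of_mem (show ω ∈ B \ V from ⟨h2, h1⟩),
            Set.indicator_of_mem h2, zero_add]
        · rw [Pi.add_apply, Set.indicator_of_notMem h1,
            Set.indicator_of_notMem (fun hc2 : ω ∈ B \ V => h2 hc2.1),
            Set.indicator_of_notMem h2, add_zero]
    rw [eB, eC] at hps
    have hxb : T (B.indicator fun _ => x) ≤ T (B.indicator fun _ => c) :=
      phi_mono hMo hPC hB hcx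
    rw [← hps] at hxb
    exact absurd hxb (not_le.2 hcon)
  -- the greedy step
  have hstep : ∀ (n : ℕ) (V : Set Ω), V ⊆ B → MeasurableSet[mG] V →
      T (V.indicator fun _ => x) ≤ T (V.indicator f) →
      ∃ V', (V' ⊆ B ∧ MeasurableSet[mG] V' ∧
          T (V'.indicator fun _ => x) ≤ T (V'.indicator f)) ∧ V ⊆ V' ∧
        ∀ E, E ⊆ B \ V → MeasurableSet[mG] E →
          T (E.indicator fun _ => x) < T (E.indicator f) →
          gaugeM T f (V ∪ E) ≤ gaugeM T f V' + 1/((n:ℝ)+1) := by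
    intro n V hVB hVm hVge
    have hRn : (B \ V) ∉ NullG mG T := hdagger V hVB hVm hVge
    obtain ⟨E₀, hE₀R, hE₀m, hE₀lt⟩ := hss (B \ V) Set.diff_subset (hB.diff hVm) hRn
    set G : Set ℝ := gaugeM T f '' {W | ∃ E, W = V ∪ E ∧ E ⊆ B \ V ∧
      MeasurableSet[mG] E ∧ T (E.indicator fun _ => x) < T (E.indicator f)} with hGdef
    have hGne : G.Nonempty := ⟨gaugeM T f (V ∪ E₀), ⟨V ∪ E₀, ⟨E₀, rfl, hE₀R, hE₀m, hE₀lt⟩, rfl⟩⟩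
    have hGbdd : BddAbove G := by
      refine ⟨gaugeM T f Set.univ, fun r hr => ?_⟩
      obtain ⟨W, ⟨E, rfl, hE1, hE2, _⟩, rfl⟩ := hr
      exact mMono hMo hPC hM (hVm.union hE2) MeasurableSet.univ (Set.subset_univ _)
    have hlt : sSup G - 1/((n:ℝ)+1) < sSup G := by
      have : (0:ℝ) < 1/((n:ℝ)+1) := by positivity
      linarith
    obtain ⟨r, hrG, hrgt⟩ := exists_lt_of_lt_csSup hGne hlt
    obtain ⟨W, ⟨E, rfl, hEsub, hEm, hElt⟩, rfl⟩ := hrG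
    have hVEdisj : V ∩ E = ∅ := by
      ext ω
      simp only [Set.mem_inter_iff, Set.mem_empty_iff_false, iff_false, not_and]
      intro h1 h2
      exact (hEsub h2).2 h1
    refine ⟨V ∪ E, ⟨Set.union_subset hVB (hEsub.trans Set.diff_subset),
      hVm.union hEm, geUnion hT0 hMo hPC hPS hNB hM hVm hEm hVEdisj hVge hElt.le⟩,
      Set.subset_union_left, ?_⟩
    intro E' hE' hE'm hE'lt
    have hmem : gaugeM T f (V ∪ E') ∈ G := ⟨V ∪ E', ⟨E', rfl, hE', hE'm, hE'lt⟩, rfl⟩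
    have := le_csSup hGbdd hmem
    linarith
  choose step hstepP hstepSub hstepGain using hstep
  -- build the increasing sequence
  set Q : Set Ω → Prop := fun V => V ⊆ B ∧ MeasurableSet[mG] V ∧
    T (V.indicator fun _ => x) ≤ T (V.indicator f) with hQdef
  have hQ0 : Q ∅ := by
    refine ⟨Set.empty_subset B, MeasurableSet.empty, ?_⟩
    rw [Set.indicator_empty, Set.indicator_empty]
  let F : ℕ → {V : Set Ω // Q V} := fun n =>
    Nat.rec ⟨∅, hQ0⟩ (fun k p =>
      ⟨step k p.1 p.2.1 p.2.2.1 p.2.2.2, hstepP k p.1 p.2.1 p.2.2.1 p.2.2.2⟩) n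
  set Vs : ℕ → Set Ω := fun n => (F n).1 with hVsdef
  have hVsQ : ∀ n, Q (Vs n) := fun n => (F n).2
  have hVsSucc : ∀ n, Vs (n+1) = step n (Vs n) (hVsQ n).1 (hVsQ n).2.1 (hVsQ n).2.2 := by
    intro n; rfl
  have hVsmono : ∀ n, Vs n ⊆ Vs (n+1) := by
    intro n
    rw [hVsSucc n]
    exact hstepSub n (Vs n) (hVsQ n).1 (hVsQ n).2.1 (hVsQ n).2.2
  have hVsgain : ∀ n E, E ⊆ B \ Vs n → MeasurableSet[mG] E →
      T (E.indicator fun _ => x) < T (E.indicator f) →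
      gaugeM T f (Vs n ∪ E) ≤ gaugeM T f (Vs (n+1)) + 1/((n:ℝ)+1) := by
    intro n E h1 h2 h3
    rw [hVsSucc n]
    exact hstepGain n (Vs n) (hVsQ n).1 (hVsQ n).2.1 (hVsQ n).2.2 E h1 h2 h3
  set W : Set Ω := ⋃ n, Vs n with hWdef
  have hWm : MeasurableSet[mG] W := MeasurableSet.iUnion (fun n => (hVsQ n).2.1)
  have hWB : W ⊆ B := Set.iUnion_subset (fun n => (hVsQ n).1)
  have hWge : T (W.indicator fun _ => x) ≤ T (W.indicator f) :=
    geIUnionMono hT0 hMo hPC hPS hNB hM hVsmono (fun n => (hVsQ n).2.1)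
      (fun n => (hVsQ n).2.2)
  have hRW : (B \ W) ∉ NullG mG T := hdagger W hWB hWm hWge
  obtain ⟨Es, hEsSub, hEsm, hEslt⟩ := hss (B \ W) Set.diff_subset (hB.diff hWm) hRW
  have hEsn : Es ∉ NullG mG T := by
    intro h
    rw [Tf_null hT0 hNB h, phi_null hT0 h] at hEslt
    exact lt_irrefl _ hEslt
  -- limits
  have hmono' : ∀ k n, k ≤ n → Vs k ⊆ Vs n := fun k n h =>
    (monotone_nat_of_le_succ hVsmono) h
  have hVsW : ∀ n, Vs n ⊆ W := fun n => Set.subset_iUnion Vs n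
  have hlim1 : Tendsto (fun n => gaugeM T f (Vs n)) atTop (𝓝 (gaugeM T f W)) :=
    tend_gauge hPC hVsmono (fun n => (hVsQ n).2.1)
  have hlim1' : Tendsto (fun n => gaugeM T f (Vs (n+1))) atTop (𝓝 (gaugeM T f W)) :=
    hlim1.comp (tendsto_add_atTop_nat 1)
  have hUeq : (⋃ n, (Vs n ∪ Es)) = W ∪ Es := by
    ext ω
    simp only [Set.mem_iUnion, Set.mem_union, hWdef]
    constructor
    · rintro ⟨n, h | h⟩
      · exact Or.inl ⟨n, h⟩
      · exact Or.inr h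
    · rintro (⟨n, hn⟩ | h)
      · exact ⟨n, Or.inl hn⟩
      · exact ⟨0, Or.inr h⟩
  have hlim2 : Tendsto (fun n => gaugeM T f (Vs n ∪ Es)) atTop
      (𝓝 (gaugeM T f (W ∪ Es))) := by
    have := tend_gauge (f := f) hPC (V := fun n => Vs n ∪ Es)
      (fun n => Set.union_subset_union_left Es (hVsmono n))
      (fun n => ((hVsQ n).2.1).union hEsm)
    rwa [hUeq] at this
  have hineq : ∀ n, gaugeM T f (Vs n ∪ Es) ≤ gaugeM T f (Vs (n+1)) + 1/((n:ℝ)+1) := by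
    intro n
    refine hVsgain n Es (fun ω hω => ⟨hEsSub hω |>.1, fun hc => (hEsSub hω).2 (hVsW n hc)⟩)
      hEsm hEslt
  have hlimR : Tendsto (fun n => gaugeM T f (Vs (n+1)) + 1/((n:ℝ)+1)) atTop
      (𝓝 (gaugeM T f W)) := by
    have h2 : Tendsto (fun n : ℕ => 1/((n:ℝ)+1)) atTop (𝓝 0) :=
      tendsto_one_div_add_atTop_nhds_zero_nat
    have := hlim1'.add h2
    simpa using this
  have hfinal : gaugeM T f (W ∪ Es) ≤ gaugeM T f W :=
    le_of_tendsto_of_tendsto' hlim2 hlimR hineq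
  have hdisjWE : W ∩ Es = ∅ := by
    ext ω
    simp only [Set.mem_inter_iff, Set.mem_empty_iff_false, iff_false, not_and]
    intro h1 h2
    exact (hEsSub h2).2 h1
  have hstrict : gaugeM T f W < gaugeM T f (W ∪ Es) :=
    mStrict hMo hPC hM hWm hEsm hdisjWE hEsn
  linarith

end Dicho2
section Paste

variable {Ω : Type*} {mG : MeasurableSpace Ω} {T : (Ω → ℝ) → ℝ} {f : Ω → ℝ}

lemma bdd_finsum (u : ℕ → ℝ) (A : ℕ → Set Ω) (n : ℕ)
    (hmeas : ∀ j, j < n → MeasurableSet[mG] (A j)) :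
    BddMeas mG (∑ j ∈ Finset.range n, (A j).indicator (fun _ => u j)) := by
  constructor
  · have : (∑ j ∈ Finset.range n, (A j).indicator (fun _ => u j)) =
        fun ω => ∑ j ∈ Finset.range n, (A j).indicator (fun _ => u j) ω := by
      funext ω; rw [Finset.sum_apply]
    rw [this]
    exact Finset.measurable_sum _ (fun j hj =>
      (bdd_indicator_const (u j) (hmeas j (Finset.mem_range.1 hj))).1)
  · refine ⟨∑ j ∈ Finset.range n, |u j|, fun ω => ?_⟩
    rw [Finset.sum_apply]
    refine (Finset.abs_sum_le_sum_abs _ _).trans (Finset.sum_le_sum (fun j hj => ?_))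
    by_cases h : ω ∈ A j
    · rw [Set.indicator_of_mem h]
    · rw [Set.indicator_of_notMem h]; simp

lemma finsum_eq_zero_off (u : ℕ → ℝ) (A : ℕ → Set Ω) (n : ℕ) {ω : Ω}
    (h : ∀ j, j < n → ω ∉ A j) :
    (∑ j ∈ Finset.range n, (A j).indicator (fun _ => u j)) ω = 0 := by
  rw [Finset.sum_apply]
  refine Finset.sum_eq_zero (fun j hj => ?_)
  rw [Set.indicator_of_notMem (h j (Finset.mem_range.1 hj))]

lemma pasteUpper (hT0 : T 0 = 0) (hMo : GMo mG T) (hQL : GQL mG T) (hPC : GPC mG T)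
    (hPS : GPS mG T f) (hNB : GNB mG T f) (hM : 0 < supNorm f)
    (A : ℕ → Set Ω) (u : ℕ → ℝ) :
    ∀ n : ℕ, (∀ j, j < n → MeasurableSet[mG] (A j)) →
    (∀ i j, i < n → j < n → i ≠ j → A i ∩ A j = ∅) →
    (∀ j, j < n → ∀ B ⊆ A j, MeasurableSet[mG] B →
      T (B.indicator f) ≤ T (B.indicator fun _ => u j)) →
    T ((⋃ (j : ℕ) (_ : j < n), A j).indicator f) ≤
      T (∑ j ∈ Finset.range n, (A j).indicator (fun _ => u j)) := by
  intro n
  induction n with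
  | zero =>
      intro _ _ _
      have h1 : (⋃ (j : ℕ) (_ : j < 0), A j) = (∅ : Set Ω) := by
        simp
      rw [h1, Set.indicator_empty, Finset.range_zero, Finset.sum_empty]
      have e0 : (fun _ : Ω => (0:ℝ)) = (0 : Ω → ℝ) := rfl
      rw [e0]
  | succ n ih =>
      intro hmeas hdisj hupper
      set W : Set Ω := ⋃ (j : ℕ) (_ : j < n), A j with hWdef
      have hWm : MeasurableSet[mG] W := by
        refine MeasurableSet.iUnion (fun j => ?_)
        by_cases h : j < n
        · simpa [h] using (hmeas j (h.trans (Nat.lt_succ_self n)))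
        · simp [h]
      have hWmem : ∀ {ω}, ω ∈ W ↔ ∃ j, j < n ∧ ω ∈ A j := by
        intro ω
        simp only [hWdef, Set.mem_iUnion]
        constructor
        · rintro ⟨j, hj, h⟩; exact ⟨j, hj, h⟩
        · rintro ⟨j, hj, h⟩; exact ⟨j, hj, h⟩
      have hAnW : ∀ {ω}, ω ∈ A n → ω ∉ W := by
        intro ω hω hc
        obtain ⟨j, hj, hωj⟩ := hWmem.1 hc
        exact absurd (Set.mem_inter hωj hω)
          (by rw [hdisj j n (hj.trans (Nat.lt_succ_self n)) (Nat.lt_succ_self n) (Nat.ne_of_lt hj)]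
              exact Set.notMem_empty ω)
      have hUn : (⋃ (j : ℕ) (_ : j < n+1), A j) = W ∪ A n := by
        ext ω
        simp only [Set.mem_iUnion, Set.mem_union]
        constructor
        · rintro ⟨j, hj, h⟩
          rcases Nat.lt_succ_iff_lt_or_eq.1 hj with h' | h'
          · exact Or.inl (hWmem.2 ⟨j, h', h⟩)
          · subst h'; exact Or.inr h
        · rintro (h | h)
          · obtain ⟨j, hj, h'⟩ := hWmem.1 h
            exact ⟨j, hj.trans (Nat.lt_succ_self n), h'⟩
          · exact ⟨n, Nat.lt_succ_self n, h⟩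
      set S : Ω → ℝ := ∑ j ∈ Finset.range n, (A j).indicator (fun _ => u j) with hSdef
      have hSbdd : BddMeas mG S :=
        bdd_finsum u A n (fun j hj => hmeas j (hj.trans (Nat.lt_succ_self n)))
      have hSoff : ∀ {ω}, ω ∉ W → S ω = 0 := by
        intro ω hω
        exact finsum_eq_zero_off u A n (fun j hj hc => hω (hWmem.2 ⟨j, hj, hc⟩))
      have hIH : T (W.indicator f) ≤ T S :=
        ih (fun j hj => hmeas j (hj.trans (Nat.lt_succ_self n)))
          (fun i j hi hj => hdisj i j (hi.trans (Nat.lt_succ_self n))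
            (hj.trans (Nat.lt_succ_self n)))
          (fun j hj => hupper j (hj.trans (Nat.lt_succ_self n)))
      obtain ⟨cn, hcnx, hcnb, hcne⟩ := chooseLE hT0 hMo hPC hNB hM
        (hmeas n (Nat.lt_succ_self n))
        (hupper n (Nat.lt_succ_self n) (A n) (le_refl _) (hmeas n (Nat.lt_succ_self n)))
      obtain ⟨c, hc1, hc2, hce⟩ := exCE hPC hNB hM hWm
      have hDisj : Disjoint W (A n) := Set.disjoint_left.2 (fun ω h1 h2 => hAnW h2 h1)
      have hps := hPS W (A n) hWm (hmeas n (Nat.lt_succ_self n)) hDisj c cn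
        hce.symm hcne.symm
      have eB : W.indicator f + (A n).indicator f = (W ∪ A n).indicator f := by
        funext ω
        by_cases h1 : ω ∈ W
        · rw [Pi.add_apply, Set.indicator_of_mem h1,
            Set.indicator_of_notMem (fun hc => hAnW hc h1),
            Set.indicator_of_mem (Set.mem_union_left _ h1), add_zero]
        · by_cases h2 : ω ∈ A n
          · rw [Pi.add_apply, Set.indicator_of_notMem h1, Set.indicator_of_mem h2,
              Set.indicator_of_mem (Set.mem_union_right _ h2), zero_add]
          · rw [Pi.add_apply, Set.indicator_of_notMem h1, Set.indicator_of_notMem h2,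
              Set.indicator_of_notMem (by simp [h1, h2]), add_zero]
      rw [eB] at hps
      have step1 : T ((W ∪ A n).indicator f) ≤
          T (W.indicator (fun _ => c) + (A n).indicator (fun _ => u n)) := by
        rw [hps]
        refine monoT hMo hPC
          (bdd_add (bdd_indicator_const c hWm)
            (bdd_indicator_const cn (hmeas n (Nat.lt_succ_self n))))
          (bdd_add (bdd_indicator_const c hWm)
            (bdd_indicator_const (u n) (hmeas n (Nat.lt_succ_self n)))) ?_
        intro ω
        simp only [Pi.add_apply]
        by_cases h2 : ω ∈ A n
        · rw [Set.indicator_of_mem h2, Set.indicator_of_mem h2]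
          linarith [hcnx]
        · rw [Set.indicator_of_notMem h2, Set.indicator_of_notMem h2]
      have step2 : T (W.indicator (fun _ => c) + (A n).indicator (fun _ => u n)) ≤
          T (S + (A n).indicator (fun _ => u n)) := by
        have hg : BddMeas mG ((A n).indicator (fun _ : Ω => u n)) :=
          bdd_indicator_const (u n) (hmeas n (Nat.lt_succ_self n))
        have hWS : W.indicator S = S := by
          funext ω
          by_cases h : ω ∈ W
          · rw [Set.indicator_of_mem h]
          · rw [Set.indicator_of_notMem h, hSoff h]
        have hWc0 : Wᶜ.indicator (0 : Ω → ℝ) = 0 := by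
          funext ω; simp [Set.indicator_apply]
        have hyp : T (W.indicator (fun _ => c) + Wᶜ.indicator (0 : Ω → ℝ)) ≤
            T (W.indicator S + Wᶜ.indicator (0 : Ω → ℝ)) := by
          rw [hWc0, add_zero, add_zero, hWS, hce]
          exact hIH
        have hcomp := hQL (fun _ => c) S (bdd_const c) hSbdd W hWm
          ⟨0, bdd_zero, hyp⟩ ((A n).indicator (fun _ => u n)) hg
        have hWg : Wᶜ.indicator ((A n).indicator (fun _ : Ω => u n)) =
            (A n).indicator (fun _ => u n) := by
          funext ω
          by_cases h : ω ∈ W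
          · rw [Set.indicator_of_notMem (by simpa using h),
              Set.indicator_of_notMem (fun hc => hAnW hc h)]
          · rw [Set.indicator_of_mem (by simpa using h)]
        rw [hWg, hWS] at hcomp
        exact hcomp
      have step3 : S + (A n).indicator (fun _ => u n) =
          ∑ j ∈ Finset.range (n+1), (A j).indicator (fun _ => u j) := by
        rw [hSdef, Finset.sum_range_succ]
      rw [hUn]
      calc T ((W ∪ A n).indicator f) ≤ _ := step1
        _ ≤ _ := step2
        _ = _ := by rw [step3]

lemma pasteLower (hT0 : T 0 = 0) (hMo : GMo mG T) (hQL : GQL mG T) (hPC : GPC mG T)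
    (hPS : GPS mG T f) (hNB : GNB mG T f) (hM : 0 < supNorm f)
    (A : ℕ → Set Ω) (u : ℕ → ℝ) :
    ∀ n : ℕ, (∀ j, j < n → MeasurableSet[mG] (A j)) →
    (∀ i j, i < n → j < n → i ≠ j → A i ∩ A j = ∅) →
    (∀ j, j < n → ∀ B ⊆ A j, MeasurableSet[mG] B →
      T (B.indicator fun _ => u j) ≤ T (B.indicator f)) →
    T (∑ j ∈ Finset.range n, (A j).indicator (fun _ => u j)) ≤
      T ((⋃ (j : ℕ) (_ : j < n), A j).indicator f) := by
  intro n
  induction n with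
  | zero =>
      intro _ _ _
      have h1 : (⋃ (j : ℕ) (_ : j < 0), A j) = (∅ : Set Ω) := by
        simp
      rw [h1, Set.indicator_empty, Finset.range_zero, Finset.sum_empty]
      have e0 : (fun _ : Ω => (0:ℝ)) = (0 : Ω → ℝ) := rfl
      rw [e0]
  | succ n ih =>
      intro hmeas hdisj hlower
      set W : Set Ω := ⋃ (j : ℕ) (_ : j < n), A j with hWdef
      have hWm : MeasurableSet[mG] W := by
        refine MeasurableSet.iUnion (fun j => ?_)
        by_cases h : j < n
        · simpa [h] using (hmeas j (h.trans (Nat.lt_succ_self n)))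
        · simp [h]
      have hWmem : ∀ {ω}, ω ∈ W ↔ ∃ j, j < n ∧ ω ∈ A j := by
        intro ω
        simp only [hWdef, Set.mem_iUnion]
        constructor
        · rintro ⟨j, hj, h⟩; exact ⟨j, hj, h⟩
        · rintro ⟨j, hj, h⟩; exact ⟨j, hj, h⟩
      have hAnW : ∀ {ω}, ω ∈ A n → ω ∉ W := by
        intro ω hω hc
        obtain ⟨j, hj, hωj⟩ := hWmem.1 hc
        exact absurd (Set.mem_inter hωj hω)
          (by rw [hdisj j n (hj.trans (Nat.lt_succ_self n)) (Nat.lt_succ_self n) (Nat.ne_of_lt hj)]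
              exact Set.notMem_empty ω)
      have hUn : (⋃ (j : ℕ) (_ : j < n+1), A j) = W ∪ A n := by
        ext ω
        simp only [Set.mem_iUnion, Set.mem_union]
        constructor
        · rintro ⟨j, hj, h⟩
          rcases Nat.lt_succ_iff_lt_or_eq.1 hj with h' | h'
          · exact Or.inl (hWmem.2 ⟨j, h', h⟩)
          · subst h'; exact Or.inr h
        · rintro (h | h)
          · obtain ⟨j, hj, h'⟩ := hWmem.1 h
            exact ⟨j, hj.trans (Nat.lt_succ_self n), h'⟩
          · exact ⟨n, Nat.lt_succ_self n, h⟩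
      set S : Ω → ℝ := ∑ j ∈ Finset.range n, (A j).indicator (fun _ => u j) with hSdef
      have hSbdd : BddMeas mG S :=
        bdd_finsum u A n (fun j hj => hmeas j (hj.trans (Nat.lt_succ_self n)))
      have hSoff : ∀ {ω}, ω ∉ W → S ω = 0 := by
        intro ω hω
        exact finsum_eq_zero_off u A n (fun j hj hc => hω (hWmem.2 ⟨j, hj, hc⟩))
      have hIH : T S ≤ T (W.indicator f) :=
        ih (fun j hj => hmeas j (hj.trans (Nat.lt_succ_self n)))
          (fun i j hi hj => hdisj i j (hi.trans (Nat.lt_succ_self n))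
            (hj.trans (Nat.lt_succ_self n)))
          (fun j hj => hlower j (hj.trans (Nat.lt_succ_self n)))
      obtain ⟨cn, hcnx, hcnb, hcne⟩ := chooseGE hT0 hMo hPC hNB hM
        (hmeas n (Nat.lt_succ_self n))
        (hlower n (Nat.lt_succ_self n) (A n) (le_refl _) (hmeas n (Nat.lt_succ_self n)))
      obtain ⟨c, hc1, hc2, hce⟩ := exCE hPC hNB hM hWm
      have hDisj : Disjoint W (A n) := Set.disjoint_left.2 (fun ω h1 h2 => hAnW h2 h1)
      have hps := hPS W (A n) hWm (hmeas n (Nat.lt_succ_self n)) hDisj c cn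
        hce.symm hcne.symm
      have eB : W.indicator f + (A n).indicator f = (W ∪ A n).indicator f := by
        funext ω
        by_cases h1 : ω ∈ W
        · rw [Pi.add_apply, Set.indicator_of_mem h1,
            Set.indicator_of_notMem (fun hc => hAnW hc h1),
            Set.indicator_of_mem (Set.mem_union_left _ h1), add_zero]
        · by_cases h2 : ω ∈ A n
          · rw [Pi.add_apply, Set.indicator_of_notMem h1, Set.indicator_of_mem h2,
              Set.indicator_of_mem (Set.mem_union_right _ h2), zero_add]
          · rw [Pi.add_apply, Set.indicator_of_notMem h1, Set.indicator_of_notMem h2,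
              Set.indicator_of_notMem (by simp [h1, h2]), add_zero]
      rw [eB] at hps
      have step1 : T (W.indicator (fun _ => c) + (A n).indicator (fun _ => u n)) ≤
          T ((W ∪ A n).indicator f) := by
        rw [hps]
        refine monoT hMo hPC
          (bdd_add (bdd_indicator_const c hWm)
            (bdd_indicator_const (u n) (hmeas n (Nat.lt_succ_self n))))
          (bdd_add (bdd_indicator_const c hWm)
            (bdd_indicator_const cn (hmeas n (Nat.lt_succ_self n)))) ?_
        intro ω
        simp only [Pi.add_apply]
        by_cases h2 : ω ∈ A n
        · rw [Set.indicator_of_mem h2, Set.indicator_of_mem h2]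
          linarith [hcnx]
        · rw [Set.indicator_of_notMem h2, Set.indicator_of_notMem h2]
      have step2 : T (S + (A n).indicator (fun _ => u n)) ≤
          T (W.indicator (fun _ => c) + (A n).indicator (fun _ => u n)) := by
        have hg : BddMeas mG ((A n).indicator (fun _ : Ω => u n)) :=
          bdd_indicator_const (u n) (hmeas n (Nat.lt_succ_self n))
        have hWS : W.indicator S = S := by
          funext ω
          by_cases h : ω ∈ W
          · rw [Set.indicator_of_mem h]
          · rw [Set.indicator_of_notMem h, hSoff h]
        have hWc0 : Wᶜ.indicator (0 : Ω → ℝ) = 0 := by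
          funext ω; simp [Set.indicator_apply]
        have hyp : T (W.indicator S + Wᶜ.indicator (0 : Ω → ℝ)) ≤
            T (W.indicator (fun _ => c) + Wᶜ.indicator (0 : Ω → ℝ)) := by
          rw [hWc0, add_zero, add_zero, hWS, hce]
          exact hIH
        have hcomp := hQL S (fun _ => c) hSbdd (bdd_const c) W hWm
          ⟨0, bdd_zero, hyp⟩ ((A n).indicator (fun _ => u n)) hg
        have hWg : Wᶜ.indicator ((A n).indicator (fun _ : Ω => u n)) =
            (A n).indicator (fun _ => u n) := by
          funext ω
          by_cases h : ω ∈ W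
          · rw [Set.indicator_of_notMem (by simpa using h),
              Set.indicator_of_notMem (fun hc => hAnW hc h)]
          · rw [Set.indicator_of_mem (by simpa using h)]
        rw [hWg, hWS] at hcomp
        exact hcomp
      have step3 : S + (A n).indicator (fun _ => u n) =
          ∑ j ∈ Finset.range (n+1), (A j).indicator (fun _ => u j) := by
        rw [hSdef, Finset.sum_range_succ]
      rw [hUn, ← step3]
      calc T (S + (A n).indicator (fun _ => u n)) ≤ _ := step2
        _ ≤ _ := step1

end Paste
section Squeeze

variable {Ω : Type*} {mG : MeasurableSpace Ω} {T : (Ω → ℝ) → ℝ} {f : Ω → ℝ}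

lemma squeezeStep (hT0 : T 0 = 0) (hMo : GMo mG T) (hQL : GQL mG T) (hPC : GPC mG T)
    (hPS : GPS mG T f) (hNB : GNB mG T f) (hM : 0 < supNorm f)
    {A : Set Ω} (hA : MeasurableSet[mG] A) (D : ℚ → Set Ω) (qL qM : ℚ)
    (hDm : ∀ q, MeasurableSet[mG] (D q))
    (hDmono : ∀ p q : ℚ, p ≤ q → D p ⊆ D q)
    (hDsx : ∀ (q : ℚ) (B : Set Ω), MeasurableSet[mG] B → B ⊆ D q →
      T (B.indicator f) ≤ T (B.indicator fun _ => (q:ℝ)))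
    (hdich : ∀ (q : ℚ) (B : Set Ω), MeasurableSet[mG] B → B ∩ D q = ∅ →
      T (B.indicator fun _ => (q:ℝ)) ≤ T (B.indicator f))
    (hNNnull : (D qL ∪ (Set.univ \ D qM)) ∈ NullG mG T)
    (hqLM : qL ≤ qM)
    (gh : Ω → ℝ) (hghb : BddMeas mG gh)
    (hghle : ∀ (q : ℚ) ω, qL ≤ q → q ≤ qM → ω ∈ D q → gh ω ≤ (q:ℝ))
    (hghge : ∀ (q : ℚ) ω, q ≤ qM → ω ∉ D q → (q:ℝ) ≤ gh ω)
    (k : ℕ) :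
    ∃ Hi Lo : Ω → ℝ, BddMeas mG Hi ∧ BddMeas mG Lo ∧
      (∀ ω, |Hi ω - A.indicator gh ω| ≤ ((qM:ℝ) - (qL:ℝ))/((k:ℝ)+1)) ∧
      (∀ ω, |Lo ω - A.indicator gh ω| ≤ ((qM:ℝ) - (qL:ℝ))/((k:ℝ)+1)) ∧
      T (A.indicator f) ≤ T Hi ∧ T Lo ≤ T (A.indicator f) ∧
      T (A.indicator gh) ≤ T Hi ∧ T Lo ≤ T (A.indicator gh) := by
  classical
  set NN : Set Ω := D qL ∪ (Set.univ \ D qM) with hNNdef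
  have hNNm : MeasurableSet[mG] NN := hNNnull.1
  set rr : ℕ → ℚ := fun j => qL + (j:ℚ) * ((qM - qL)/((k:ℚ)+1)) with hrrdef
  have hkpos : (0:ℚ) < (k:ℚ)+1 := by positivity
  have hstep : ∀ i : ℕ, rr (i+1) - rr i = (qM - qL)/((k:ℚ)+1) := by
    intro i
    simp only [hrrdef]
    push_cast
    ring
  have hrr0 : rr 0 = qL := by simp [hrrdef]
  have hrrK : rr (k+1) = qM := by
    simp only [hrrdef]
    push_cast
    field_simp
    ring
  have hrrmono : ∀ i j : ℕ, i ≤ j → rr i ≤ rr j := by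
    intro i j hij
    simp only [hrrdef]
    have h1 : (0:ℚ) ≤ (qM - qL)/((k:ℚ)+1) := by
      apply div_nonneg (by linarith) (le_of_lt hkpos)
    have h2 : (i:ℚ) ≤ (j:ℚ) := by exact_mod_cast hij
    nlinarith
  have hrange : ∀ j : ℕ, j ≤ k+1 → qL ≤ rr j ∧ rr j ≤ qM := by
    intro j hj
    constructor
    · rw [← hrr0]; exact hrrmono 0 j (Nat.zero_le j)
    · rw [← hrrK]; exact hrrmono j (k+1) hj
  have hmeshR : ((rr 1 : ℚ) : ℝ) - ((rr 0 : ℚ) : ℝ) = ((qM:ℝ) - (qL:ℝ))/((k:ℝ)+1) := by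
    have h := hstep 0
    have h2 : ((rr 1 - rr 0 : ℚ) : ℝ) = (((qM - qL)/((k:ℚ)+1) : ℚ) : ℝ) := by
      exact_mod_cast congrArg (fun q : ℚ => (q:ℝ)) h
    push_cast at h2
    linarith
  have hmeshRn : ∀ i : ℕ, ((rr (i+1) : ℚ) : ℝ) - ((rr i : ℚ) : ℝ) =
      ((qM:ℝ) - (qL:ℝ))/((k:ℝ)+1) := by
    intro i
    have h := hstep i
    have h2 : ((rr (i+1) - rr i : ℚ) : ℝ) = (((qM - qL)/((k:ℚ)+1) : ℚ) : ℝ) := by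
      exact_mod_cast congrArg (fun q : ℚ => (q:ℝ)) h
    push_cast at h2
    linarith
  have hmesh0 : (0:ℝ) ≤ ((qM:ℝ) - (qL:ℝ))/((k:ℝ)+1) := by
    have : (qL:ℝ) ≤ (qM:ℝ) := by exact_mod_cast hqLM
    have hk : (0:ℝ) < (k:ℝ)+1 := by positivity
    apply div_nonneg (by linarith) (le_of_lt hk)
  set Aseq : ℕ → Set Ω := fun j => match j with
    | 0 => A ∩ NN
    | Nat.succ i => if i + 1 ≤ k+1 then A ∩ (D (rr (i+1)) \ D (rr i)) else ∅ with hAseqdef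
  have hAseq0 : Aseq 0 = A ∩ NN := rfl
  have hAseqS : ∀ i : ℕ, i + 1 ≤ k + 1 → Aseq (i+1) = A ∩ (D (rr (i+1)) \ D (rr i)) := by
    intro i hi
    simp only [hAseqdef, if_pos hi]
  have hAseqS' : ∀ i : ℕ, ¬(i + 1 ≤ k + 1) → Aseq (i+1) = ∅ := by
    intro i hi
    simp only [hAseqdef, if_neg hi]
  have hAseqsub : ∀ j, Aseq j ⊆ A := by
    intro j
    match j with
    | 0 => exact Set.inter_subset_left
    | Nat.succ i =>
        by_cases h : i + 1 ≤ k+1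
        · rw [hAseqS i h]; exact Set.inter_subset_left
        · rw [hAseqS' i h]; exact Set.empty_subset A
  have hAseqm : ∀ j, MeasurableSet[mG] (Aseq j) := by
    intro j
    match j with
    | 0 => exact hA.inter hNNm
    | Nat.succ i =>
        by_cases h : i + 1 ≤ k+1
        · rw [hAseqS i h]; exact hA.inter ((hDm _).diff (hDm _))
        · rw [hAseqS' i h]; exact MeasurableSet.empty
  have hkey : ∀ i j, i < j → j ≤ k+1 → Aseq i ∩ Aseq j = ∅ := by
    intro i j hij hjk
    match j, hij, hjk with
    | 0, hij, _ => exact absurd hij (Nat.not_lt_zero i)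
    | Nat.succ j', hij, hjk =>
      rw [hAseqS j' hjk, Set.eq_empty_iff_forall_notMem]
      intro ω hω
      have hωi := hω.1
      have hωj := hω.2
      have hnotD : ω ∉ D (rr j') := hωj.2.2
      match i, hij with
      | 0, _ =>
          rw [hAseq0] at hωi
          rcases hωi.2 with h | h
          · refine hnotD (hDmono qL (rr j') (hrange j' (Nat.le_of_succ_le hjk)).1 h)
          · exact h.2 (hDmono (rr (j'+1)) qM (hrange (j'+1) hjk).2 hωj.2.1)
      | Nat.succ i', hij =>
          have hii : i' + 1 ≤ k + 1 := le_trans (Nat.le_of_lt hij) hjk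
          rw [hAseqS i' hii] at hωi
          have hlt : i' + 1 ≤ j' := Nat.lt_succ_iff.1 hij
          exact hnotD (hDmono _ _ (hrrmono _ _ hlt) hωi.2.1)
  have hdisj : ∀ i j, i < k+2 → j < k+2 → i ≠ j → Aseq i ∩ Aseq j = ∅ := by
    intro i j hi hj hij
    rcases Nat.lt_or_ge i j with h | h
    · exact hkey i j h (Nat.lt_succ_iff.1 hj)
    · have h' : j < i := lt_of_le_of_ne h (fun hc => hij hc.symm)
      rw [Set.inter_comm]
      exact hkey j i h' (Nat.lt_succ_iff.1 hi)
  have hcover : (⋃ (j : ℕ) (_ : j < k+2), Aseq j) = A := by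
    apply Set.Subset.antisymm
    · exact Set.iUnion_subset (fun j => Set.iUnion_subset (fun _ => hAseqsub j))
    · intro ω hω
      by_cases hNNω : ω ∈ NN
      · refine Set.mem_iUnion.2 ⟨0, Set.mem_iUnion.2 ⟨by omega, ?_⟩⟩
        rw [hAseq0]; exact ⟨hω, hNNω⟩
      · have hn1 : ω ∉ D qL := fun hc => hNNω (Or.inl hc)
        have hn2 : ω ∈ D qM := by
          by_contra hc
          exact hNNω (Or.inr ⟨trivial, hc⟩)
        have hfind : ∀ j : ℕ, j ≤ k+1 → ω ∈ D (rr j) →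
            ∃ i, i+1 ≤ j ∧ ω ∈ D (rr (i+1)) \ D (rr i) := by
          intro j
          induction j with
          | zero =>
              intro _ h
              rw [hrr0] at h
              exact absurd h hn1
          | succ j ihj =>
              intro hj h
              by_cases hc : ω ∈ D (rr j)
              · obtain ⟨i, h1, h2⟩ := ihj (Nat.le_of_succ_le hj) hc
                exact ⟨i, h1.trans (Nat.le_succ j), h2⟩
              · exact ⟨j, le_refl _, ⟨h, hc⟩⟩
        obtain ⟨i, hik, hmem⟩ := hfind (k+1) (le_refl _) (by rw [hrrK]; exact hn2)
        refine Set.mem_iUnion.2 ⟨i+1, Set.mem_iUnion.2 ⟨by omega, ?_⟩⟩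
        rw [hAseqS i hik]
        exact ⟨hω, hmem⟩
  set uHi : ℕ → ℝ := fun j => match j with
    | 0 => (qM:ℝ)
    | Nat.succ i => ((rr (i+1) : ℚ):ℝ) with huHidef
  set uLo : ℕ → ℝ := fun j => match j with
    | 0 => (qL:ℝ)
    | Nat.succ i => ((rr i : ℚ):ℝ) with huLodef
  have e0fun : (fun _ : Ω => (0:ℝ)) = (0 : Ω → ℝ) := rfl
  -- hereditary bounds
  have hupper : ∀ j, j < k+2 → ∀ B ⊆ Aseq j, MeasurableSet[mG] B →
      T (B.indicator f) ≤ T (B.indicator fun _ => uHi j) := by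
    intro j hj B hBsub hBm
    match j with
    | 0 =>
        rw [hAseq0] at hBsub
        have hBn : B ∈ NullG mG T :=
          null_subset hNNnull hBm (hBsub.trans Set.inter_subset_right)
        rw [Tf_null hT0 hNB hBn, phi_null hT0 hBn]
    | Nat.succ i =>
        by_cases h : i + 1 ≤ k+1
        · rw [hAseqS i h] at hBsub
          refine hDsx (rr (i+1)) B hBm ?_
          exact fun ω hω => (hBsub hω).2.1
        · rw [hAseqS' i h] at hBsub
          rw [Set.subset_empty_iff] at hBsub
          subst hBsub
          rw [Set.indicator_empty, Set.indicator_empty, e0fun]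
  have hlower : ∀ j, j < k+2 → ∀ B ⊆ Aseq j, MeasurableSet[mG] B →
      T (B.indicator fun _ => uLo j) ≤ T (B.indicator f) := by
    intro j hj B hBsub hBm
    match j with
    | 0 =>
        rw [hAseq0] at hBsub
        have hBn : B ∈ NullG mG T :=
          null_subset hNNnull hBm (hBsub.trans Set.inter_subset_right)
        rw [Tf_null hT0 hNB hBn, phi_null hT0 hBn]
    | Nat.succ i =>
        by_cases h : i + 1 ≤ k+1
        · rw [hAseqS i h] at hBsub
          refine hdich (rr i) B hBm ?_
          ext ω
          simp only [Set.mem_inter_iff, Set.mem_empty_iff_false, iff_false, not_and]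
          intro hωB hωD
          exact (hBsub hωB).2.2 hωD
        · rw [hAseqS' i h] at hBsub
          rw [Set.subset_empty_iff] at hBsub
          subst hBsub
          rw [Set.indicator_empty, Set.indicator_empty, e0fun]
  set Shi : Ω → ℝ := ∑ j ∈ Finset.range (k+2), (Aseq j).indicator (fun _ => uHi j) with hShidef
  set Slo : Ω → ℝ := ∑ j ∈ Finset.range (k+2), (Aseq j).indicator (fun _ => uLo j) with hSlodef
  have hShib : BddMeas mG Shi := bdd_finsum uHi Aseq (k+2) (fun j _ => hAseqm j)
  have hSlob : BddMeas mG Slo := bdd_finsum uLo Aseq (k+2) (fun j _ => hAseqm j)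
  have hpasteU : T (A.indicator f) ≤ T Shi := by
    have := pasteUpper hT0 hMo hQL hPC hPS hNB hM Aseq uHi (k+2)
      (fun j _ => hAseqm j) hdisj hupper
    rwa [hcover] at this
  have hpasteL : T Slo ≤ T (A.indicator f) := by
    have := pasteLower hT0 hMo hQL hPC hPS hNB hM Aseq uLo (k+2)
      (fun j _ => hAseqm j) hdisj hlower
    rwa [hcover] at this
  -- pointwise values of the sums
  have hSval : ∀ (u : ℕ → ℝ) (j : ℕ), j < k+2 → ∀ ω ∈ Aseq j,
      (∑ j' ∈ Finset.range (k+2), (Aseq j').indicator (fun _ => u j')) ω = u j := by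
    intro u j hj ω hω
    rw [Finset.sum_apply]
    rw [Finset.sum_eq_single_of_mem j (Finset.mem_range.2 hj) ?_]
    · rw [Set.indicator_of_mem hω]
    · intro i hi hij
      refine Set.indicator_of_notMem (fun hc => ?_) _
      exact absurd (Set.mem_inter hc hω)
        (by rw [hdisj i j (Finset.mem_range.1 hi) hj hij]; exact Set.notMem_empty ω)
  have hSzero : ∀ (u : ℕ → ℝ) ω, ω ∉ A →
      (∑ j' ∈ Finset.range (k+2), (Aseq j').indicator (fun _ => u j')) ω = 0 := by
    intro u ω hω
    rw [Finset.sum_apply]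
    exact Finset.sum_eq_zero (fun j _ =>
      Set.indicator_of_notMem (fun hc => hω (hAseqsub j hc)) _)
  -- the patched functions
  set Hi : Ω → ℝ := Shi + (A ∩ NN).indicator (gh - fun _ => (qM:ℝ)) with hHidef
  set Lo : Ω → ℝ := Slo + (A ∩ NN).indicator (gh - fun _ => (qL:ℝ)) with hLodef
  have hANNnull : (A ∩ NN) ∈ NullG mG T :=
    null_subset hNNnull (hA.inter hNNm) Set.inter_subset_right
  have hHiT : T Hi = T Shi :=
    hANNnull.2 Shi (gh - fun _ => (qM:ℝ)) hShib (bdd_sub hghb (bdd_const _))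
  have hLoT : T Lo = T Slo :=
    hANNnull.2 Slo (gh - fun _ => (qL:ℝ)) hSlob (bdd_sub hghb (bdd_const _))
  have hHib : BddMeas mG Hi :=
    bdd_add hShib (bdd_indicator (bdd_sub hghb (bdd_const _)) (hA.inter hNNm))
  have hLob : BddMeas mG Lo :=
    bdd_add hSlob (bdd_indicator (bdd_sub hghb (bdd_const _)) (hA.inter hNNm))
  -- pointwise analysis
  have hpoint : ∀ ω, (A.indicator gh ω ≤ Hi ω ∧ Hi ω - A.indicator gh ω ≤
        ((qM:ℝ) - (qL:ℝ))/((k:ℝ)+1)) ∧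
      (Lo ω ≤ A.indicator gh ω ∧ A.indicator gh ω - Lo ω ≤
        ((qM:ℝ) - (qL:ℝ))/((k:ℝ)+1)) := by
    intro ω
    by_cases hωA : ω ∈ A
    · by_cases hωN : ω ∈ NN
      · have hωAN : ω ∈ A ∩ NN := ⟨hωA, hωN⟩
        have h1 : Shi ω = (qM:ℝ) := by
          have := hSval uHi 0 (by omega) ω (by rw [hAseq0]; exact hωAN)
          simpa [hShidef] using this
        have h2 : Slo ω = (qL:ℝ) := by
          have := hSval uLo 0 (by omega) ω (by rw [hAseq0]; exact hωAN)
          simpa [hSlodef] using this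
        have hHiω : Hi ω = gh ω := by
          simp only [hHidef, Pi.add_apply, Set.indicator_of_mem hωAN, Pi.sub_apply]
          rw [h1]; ring
        have hLoω : Lo ω = gh ω := by
          simp only [hLodef, Pi.add_apply, Set.indicator_of_mem hωAN, Pi.sub_apply]
          rw [h2]; ring
        rw [hHiω, hLoω, Set.indicator_of_mem hωA]
        constructor
        · exact ⟨le_refl _, by simpa using hmesh0⟩
        · exact ⟨le_refl _, by simpa using hmesh0⟩
      · -- ω is in some genuine piece
        have hωU : ω ∈ ⋃ (j : ℕ) (_ : j < k+2), Aseq j := by rw [hcover]; exact hωA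
        obtain ⟨j, hrest⟩ := Set.mem_iUnion.1 hωU
        obtain ⟨hj, hωj⟩ := Set.mem_iUnion.1 hrest
        match j, hj, hωj with
        | 0, _, hωj =>
            rw [hAseq0] at hωj
            exact absurd hωj.2 hωN
        | Nat.succ i, hj, hωj =>
            have hik : i + 1 ≤ k + 1 := by
              by_contra hc
              rw [hAseqS' i hc] at hωj
              exact absurd hωj (Set.notMem_empty ω)
            have hωmem := hωj
            rw [hAseqS i hik] at hωmem
            have hghle' : gh ω ≤ ((rr (i+1) : ℚ):ℝ) :=
              hghle (rr (i+1)) ω (hrange (i+1) hik).1 (hrange (i+1) hik).2 hωmem.2.1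
            have hghge' : ((rr i : ℚ):ℝ) ≤ gh ω :=
              hghge (rr i) ω ((hrange i (Nat.le_of_succ_le hik)).2) hωmem.2.2
            have h1 : Shi ω = ((rr (i+1) : ℚ):ℝ) := by
              have := hSval uHi (i+1) hj ω hωj
              simpa [hShidef] using this
            have h2 : Slo ω = ((rr i : ℚ):ℝ) := by
              have := hSval uLo (i+1) hj ω hωj
              simpa [hSlodef] using this
            have hpatch : (A ∩ NN).indicator (gh - fun _ => (qM:ℝ)) ω = 0 :=
              Set.indicator_of_notMem (fun hc => hωN hc.2) _
            have hpatch' : (A ∩ NN).indicator (gh - fun _ => (qL:ℝ)) ω = 0 :=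
              Set.indicator_of_notMem (fun hc => hωN hc.2) _
            have hHiω : Hi ω = ((rr (i+1) : ℚ):ℝ) := by
              simp only [hHidef, Pi.add_apply, hpatch, add_zero, h1]
            have hLoω : Lo ω = ((rr i : ℚ):ℝ) := by
              simp only [hLodef, Pi.add_apply, hpatch', add_zero, h2]
            rw [hHiω, hLoω, Set.indicator_of_mem hωA]
            have hme := hmeshRn i
            constructor
            · exact ⟨hghle', by linarith⟩
            · exact ⟨hghge', by linarith⟩
    · have h1 : Shi ω = 0 := hSzero uHi ω hωA
      have h2 : Slo ω = 0 := hSzero uLo ω hωA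
      have hpatch : (A ∩ NN).indicator (gh - fun _ => (qM:ℝ)) ω = 0 :=
        Set.indicator_of_notMem (fun hc => hωA hc.1) _
      have hpatch' : (A ∩ NN).indicator (gh - fun _ => (qL:ℝ)) ω = 0 :=
        Set.indicator_of_notMem (fun hc => hωA hc.1) _
      have hHiω : Hi ω = 0 := by
        simp only [hHidef, Pi.add_apply, hpatch, add_zero, h1]
      have hLoω : Lo ω = 0 := by
        simp only [hLodef, Pi.add_apply, hpatch', add_zero, h2]
      rw [hHiω, hLoω, Set.indicator_of_notMem hωA]
      constructor
      · exact ⟨le_refl _, by simpa using hmesh0⟩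
      · exact ⟨le_refl _, by simpa using hmesh0⟩
  refine ⟨Hi, Lo, hHib, hLob, ?_, ?_, ?_, ?_, ?_, ?_⟩
  · intro ω
    have h := (hpoint ω).1
    rw [abs_le]
    constructor
    · linarith [h.1, hmesh0]
    · linarith [h.2]
  · intro ω
    have h := (hpoint ω).2
    rw [abs_le]
    constructor
    · linarith [h.2]
    · linarith [h.1, hmesh0]
  · rw [hHiT]; exact hpasteU
  · rw [hLoT]; exact hpasteL
  · rw [hHiT, ← hHiT]
    exact monoT hMo hPC (bdd_indicator hghb hA) hHib (fun ω => (hpoint ω).1.1)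
  · rw [hLoT, ← hLoT]
    exact monoT hMo hPC hLob (bdd_indicator hghb hA) (fun ω => (hpoint ω).2.1)

end Squeeze
theorem stmt12 {Ω : Type*} (mF mG : MeasurableSpace Ω) (hsub : mG ≤ mF)
    (T : (Ω → ℝ) → ℝ) (hT0 : T 0 = 0) (hMo : GMo mG T) (hQL : GQL mG T) (hPC : GPC mG T)
    (f : Ω → ℝ) (hf : BddMeas mF f) (hPS : GPS mG T f) (hNB : GNB mG T f) :
    ∃ gh : Ω → ℝ, BddMeas mG gh ∧
      (∀ A : Set Ω, MeasurableSet[mG] A → T (A.indicator f) = T (A.indicator gh)) ∧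
      ∀ gt : Ω → ℝ, BddMeas mG gt →
        (∀ A : Set Ω, MeasurableSet[mG] A → T (A.indicator f) = T (A.indicator gt)) →
        {ω | gh ω ≠ gt ω} ∈ NullG mG T := by
  classical
  suffices hex : ∃ gh : Ω → ℝ, BddMeas mG gh ∧
      (∀ A : Set Ω, MeasurableSet[mG] A → T (A.indicator f) = T (A.indicator gh)) by
    obtain ⟨gh, hgh, hprop⟩ := hex
    refine ⟨gh, hgh, hprop, ?_⟩
    intro gt hgt hgtprop
    exact uniqT hT0 hMo hPC hgh hgt (fun A hA => by rw [← hprop A hA, hgtprop A hA])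
  cases isEmpty_or_nonempty Ω with
  | inl hemp =>
      refine ⟨fun _ => 0, bdd_const 0, fun A hA => ?_⟩
      have he : A.indicator f = A.indicator (fun _ => (0:ℝ)) := funext (fun ω => hemp.elim ω)
      rw [he]
  | inr hne =>
  obtain ⟨ω₀⟩ := hne
  obtain ⟨Cf, hCf⟩ := hf.2
  have hbddA : BddAbove (Set.range fun ω => |f ω|) := by
    refine ⟨Cf, fun y hy => ?_⟩
    obtain ⟨ω, rfl⟩ := hy
    exact hCf ω
  have hfM : ∀ ω, |f ω| ≤ supNorm f := fun ω => le_ciSup hbddA ω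
  have hM0 : 0 ≤ supNorm f := (abs_nonneg (f ω₀)).trans (hfM ω₀)
  rcases eq_or_lt_of_le hM0 with hM | hM
  · -- supNorm f = 0, so f ≡ 0
    have hf0 : ∀ ω, f ω = 0 := by
      intro ω
      have := hfM ω
      rw [← hM] at this
      exact abs_eq_zero.1 (le_antisymm this (abs_nonneg _))
    refine ⟨fun _ => 0, bdd_const 0, fun A hA => ?_⟩
    have he : A.indicator f = A.indicator (fun _ => (0:ℝ)) := by
      funext ω
      by_cases h : ω ∈ A
      · rw [Set.indicator_of_mem h, Set.indicator_of_mem h, hf0]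
      · rw [Set.indicator_of_notMem h, Set.indicator_of_notMem h]
    rw [he]
  · -- main case : 0 < supNorm f
    have hmaxq : ∀ q : ℚ, ∃ C : Set Ω, SxP mG T f (q:ℝ) C ∧
        ∀ A', SxP mG T f (q:ℝ) A' → (A' \ C) ∈ NullG mG T :=
      fun q => maxSx hT0 hMo hPC hPS hNB hM (q:ℝ)
    choose Cq hCq1 hCq2 using hmaxq
    set D : ℚ → Set Ω := fun q => ⋃ p : ℚ, if p ≤ q then Cq p else ∅ with hDdef
    have hDsx' : ∀ q : ℚ, SxP mG T f (q:ℝ) (D q) := by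
      intro q
      refine sx_countable hT0 hMo hPC hPS hNB hM _ (fun p => ?_)
      by_cases h : p ≤ q
      · rw [if_pos h]
        exact sx_mono hMo hPC (by exact_mod_cast h) (hCq1 p)
      · rw [if_neg h]
        exact sx_empty hT0 _
    have hDm : ∀ q, MeasurableSet[mG] (D q) := fun q => (hDsx' q).1
    have hCsubD : ∀ q, Cq q ⊆ D q := by
      intro q
      refine Set.subset_iUnion_of_subset q ?_
      rw [if_pos (le_refl q)]
    have hDmono : ∀ p q : ℚ, p ≤ q → D p ⊆ D q := by
      intro p q hpq ω hω
      obtain ⟨r, hr⟩ := Set.mem_iUnion.1 hω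
      by_cases h : r ≤ p
      · rw [if_pos h] at hr
        exact Set.mem_iUnion.2 ⟨r, by rw [if_pos (h.trans hpq)]; exact hr⟩
      · rw [if_neg h] at hr
        exact absurd hr (Set.notMem_empty ω)
    have hDmax : ∀ (q : ℚ) A', SxP mG T f (q:ℝ) A' → (A' \ D q) ∈ NullG mG T := by
      intro q A' hA'
      refine null_subset (hCq2 q A' hA') ((hA'.1).diff (hDm q))
        (Set.diff_subset_diff_right (hCsubD q))
    have hdich : ∀ (q : ℚ) (B : Set Ω), MeasurableSet[mG] B → B ∩ D q = ∅ →
        T (B.indicator fun _ => (q:ℝ)) ≤ T (B.indicator f) :=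
      fun q B hB hBD =>
        dichotomy hT0 hMo hPC hPS hNB hM (hDsx' q) (hDmax q) hB hBD
    have hDsx : ∀ (q : ℚ) (B : Set Ω), MeasurableSet[mG] B → B ⊆ D q →
        T (B.indicator f) ≤ T (B.indicator fun _ => (q:ℝ)) :=
      fun q B hB hsub' => (hDsx' q).2 B hsub' hB
    obtain ⟨qL, hqL1, hqL2⟩ := exists_rat_btwn (show -(supNorm f) - 1 < -(supNorm f) by linarith)
    obtain ⟨qM, hqM1, hqM2⟩ := exists_rat_btwn (show supNorm f < supNorm f + 1 by linarith)
    have hqLM : qL ≤ qM := by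
      have h : (qL:ℝ) < (qM:ℝ) := by linarith
      exact_mod_cast h.le
    have hDqLnull : D qL ∈ NullG mG T := by
      refine null_countable_iUnion hT0 hPC _ (fun p => ?_)
      by_cases h : p ≤ qL
      · rw [if_pos h]
        by_contra hnn
        have h1 : T ((Cq p).indicator f) ≤ T ((Cq p).indicator fun _ => (p:ℝ)) :=
          (hCq1 p).2 (Cq p) (le_refl _) (hCq1 p).1
        have h2 := (hNB (Cq p) (hCq1 p).1).1
        have hplt : (p:ℝ) < -(supNorm f) := by
          have : (p:ℝ) ≤ (qL:ℝ) := by exact_mod_cast h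
          linarith
        have h3 := phi_lt hMo (hCq1 p).1 hnn hplt
        linarith
      · rw [if_neg h]
        exact null_empty hT0
    have hDqMfull : (Set.univ \ D qM) ∈ NullG mG T := by
      refine hDmax qM Set.univ ⟨MeasurableSet.univ, fun B _ hB => ?_⟩
      have h1 := (hNB B hB).2
      have h2 : T (B.indicator fun _ => supNorm f) ≤ T (B.indicator fun _ => (qM:ℝ)) :=
        phi_mono hMo hPC hB (le_of_lt hqM1)
      linarith
    have hNNnull : (D qL ∪ (Set.univ \ D qM)) ∈ NullG mG T :=
      null_union hDqLnull hDqMfull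
    -- definition of gh
    set ghS : Ω → Set ℝ := fun ω => insert ((qM:ℝ))
      {y | ∃ q : ℚ, qL ≤ q ∧ q ≤ qM ∧ y = (q:ℝ) ∧ ω ∈ D q} with hghSdef
    have hghSne : ∀ ω, (ghS ω).Nonempty := fun ω => ⟨(qM:ℝ), Set.mem_insert _ _⟩
    have hghSlb : ∀ ω y, y ∈ ghS ω → (qL:ℝ) ≤ y := by
      intro ω y hy
      rcases Set.mem_insert_iff.1 hy with rfl | ⟨q, h1, _, rfl, _⟩
      · exact_mod_cast hqLM
      · exact_mod_cast h1
    have hghSbdd : ∀ ω, BddBelow (ghS ω) := fun ω => ⟨(qL:ℝ), fun y hy => hghSlb ω y hy⟩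
    set gh : Ω → ℝ := fun ω => sInf (ghS ω) with hghdef
    have hghlb : ∀ ω, (qL:ℝ) ≤ gh ω := fun ω => le_csInf (hghSne ω) (hghSlb ω)
    have hghub : ∀ ω, gh ω ≤ (qM:ℝ) := fun ω => csInf_le (hghSbdd ω) (Set.mem_insert _ _)
    have hghle : ∀ (q : ℚ) ω, qL ≤ q → q ≤ qM → ω ∈ D q → gh ω ≤ (q:ℝ) := by
      intro q ω h1 h2 h3
      exact csInf_le (hghSbdd ω) (Set.mem_insert_iff.2 (Or.inr ⟨q, h1, h2, rfl, h3⟩))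
    have hghge : ∀ (q : ℚ) ω, q ≤ qM → ω ∉ D q → (q:ℝ) ≤ gh ω := by
      intro q ω hq hω
      refine le_csInf (hghSne ω) ?_
      intro y hy
      rcases Set.mem_insert_iff.1 hy with rfl | ⟨p, hp1, hp2, rfl, hpD⟩
      · exact_mod_cast hq
      · by_cases h : p < q
        · exact absurd (hDmono p q h.le hpD) hω
        · push_neg at h
          exact_mod_cast h
    have hghmeas : Measurable[mG] gh := by
      refine measurable_of_Iio (fun t => ?_)
      have hseteq : gh ⁻¹' Set.Iio t = (if (qM:ℝ) < t then Set.univ else ∅) ∪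
          ⋃ q : ℚ, (if qL ≤ q ∧ q ≤ qM ∧ (q:ℝ) < t then D q else ∅) := by
        ext ω
        simp only [Set.mem_preimage, Set.mem_Iio, Set.mem_union, Set.mem_iUnion]
        constructor
        · intro h
          obtain ⟨y, hy, hyt⟩ := (csInf_lt_iff (hghSbdd ω) (hghSne ω)).1 h
          rcases Set.mem_insert_iff.1 hy with rfl | ⟨p, hp1, hp2, rfl, hpD⟩
          · left
            rw [if_pos hyt]
            trivial
          · right
            exact ⟨p, by rw [if_pos ⟨hp1, hp2, hyt⟩]; exact hpD⟩
        · intro h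
          rcases h with h | ⟨p, hp⟩
          · by_cases hc : (qM:ℝ) < t
            · exact lt_of_le_of_lt (hghub ω) hc
            · rw [if_neg hc] at h
              exact absurd h (Set.notMem_empty ω)
          · by_cases hc : qL ≤ p ∧ p ≤ qM ∧ (p:ℝ) < t
            · rw [if_pos hc] at hp
              exact lt_of_le_of_lt (hghle p ω hc.1 hc.2.1 hp) hc.2.2
            · rw [if_neg hc] at hp
              exact absurd hp (Set.notMem_empty ω)
      rw [hseteq]
      refine MeasurableSet.union ?_ (MeasurableSet.iUnion (fun q => ?_))
      · split_ifs
        · exact MeasurableSet.univ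
        · exact MeasurableSet.empty
      · split_ifs
        · exact hDm q
        · exact MeasurableSet.empty
    have hghbdd : BddMeas mG gh := by
      refine ⟨hghmeas, ⟨|(qL:ℝ)| ⊔ |(qM:ℝ)|, fun ω => ?_⟩⟩
      rw [abs_le]
      constructor
      · have := hghlb ω
        have h2 : -(|(qL:ℝ)| ⊔ |(qM:ℝ)|) ≤ -|(qL:ℝ)| := by
          simp only [neg_le_neg_iff]
          exact le_max_left _ _
        have h3 : -|(qL:ℝ)| ≤ (qL:ℝ) := neg_abs_le _
        linarith
      · exact (hghub ω).trans ((le_abs_self _).trans (le_max_right _ _))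
    refine ⟨gh, hghbdd, fun A hA => ?_⟩
    -- the squeeze
    have hsq := fun k => squeezeStep hT0 hMo hQL hPC hPS hNB hM hA D qL qM hDm hDmono
      hDsx hdich hNNnull hqLM gh hghbdd hghle hghge k
    choose Hi Lo hHib hLob hHid hLod hfU hfL hgU hgL using hsq
    have hmesh_t : Tendsto (fun k : ℕ => ((qM:ℝ) - (qL:ℝ))/((k:ℝ)+1)) atTop (𝓝 0) := by
      have h1 := tendsto_one_div_add_atTop_nhds_zero_nat (𝕜 := ℝ)
      have h2 := h1.const_mul ((qM:ℝ) - (qL:ℝ))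
      simp only [mul_zero] at h2
      refine h2.congr (fun k => ?_)
      rw [mul_one_div]
    have hconvHi : ∀ ω, Tendsto (fun k => Hi k ω) atTop (𝓝 (A.indicator gh ω)) := by
      intro ω
      rw [tendsto_iff_dist_tendsto_zero]
      refine squeeze_zero (fun k => dist_nonneg) (fun k => ?_) hmesh_t
      rw [Real.dist_eq]
      exact hHid k ω
    have hconvLo : ∀ ω, Tendsto (fun k => Lo k ω) atTop (𝓝 (A.indicator gh ω)) := by
      intro ω
      rw [tendsto_iff_dist_tendsto_zero]
      refine squeeze_zero (fun k => dist_nonneg) (fun k => ?_) hmesh_t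
      rw [Real.dist_eq]
      exact hLod k ω
    obtain ⟨Cg, hCg⟩ := hghbdd.2
    have hmesh_le : ∀ k : ℕ, ((qM:ℝ) - (qL:ℝ))/((k:ℝ)+1) ≤ (qM:ℝ) - (qL:ℝ) := by
      intro k
      have hqq : (0:ℝ) ≤ (qM:ℝ) - (qL:ℝ) := by
        have : (qL:ℝ) ≤ (qM:ℝ) := by exact_mod_cast hqLM
        linarith
      have hk1 : (1:ℝ) ≤ (k:ℝ)+1 := by
        have : (0:ℝ) ≤ (k:ℝ) := Nat.cast_nonneg k
        linarith
      calc ((qM:ℝ) - (qL:ℝ))/((k:ℝ)+1) ≤ ((qM:ℝ) - (qL:ℝ))/1 := by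
            apply div_le_div_of_nonneg_left hqq one_pos hk1
        _ = (qM:ℝ) - (qL:ℝ) := by rw [div_one]
    have hindb : ∀ ω, |A.indicator gh ω| ≤ Cg := by
      intro ω
      by_cases h : ω ∈ A
      · rw [Set.indicator_of_mem h]; exact hCg ω
      · rw [Set.indicator_of_notMem h]
        simpa using (abs_nonneg (gh ω)).trans (hCg ω)
    have hbound : ∀ (G : ℕ → Ω → ℝ),
        (∀ k ω, |G k ω - A.indicator gh ω| ≤ ((qM:ℝ) - (qL:ℝ))/((k:ℝ)+1)) →
        ∀ k ω, |G k ω| ≤ Cg + ((qM:ℝ) - (qL:ℝ)) := by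
      intro G hG k ω
      have h1 := hG k ω
      have h3 := hmesh_le k
      have he : (G k ω - A.indicator gh ω) + A.indicator gh ω = G k ω := by ring
      calc |G k ω| = |(G k ω - A.indicator gh ω) + A.indicator gh ω| := by rw [he]
        _ ≤ |G k ω - A.indicator gh ω| + |A.indicator gh ω| := abs_add_le _ _
        _ ≤ Cg + ((qM:ℝ) - (qL:ℝ)) := by linarith [hindb ω]
    have hlimHi : Tendsto (fun k => T (Hi k)) atTop (𝓝 (T (A.indicator gh))) :=
      hPC Hi (A.indicator gh) hHib (bdd_indicator hghbdd hA)
        ⟨Cg + ((qM:ℝ) - (qL:ℝ)), hbound Hi hHid⟩ hconvHi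
    have hlimLo : Tendsto (fun k => T (Lo k)) atTop (𝓝 (T (A.indicator gh))) :=
      hPC Lo (A.indicator gh) hLob (bdd_indicator hghbdd hA)
        ⟨Cg + ((qM:ℝ) - (qL:ℝ)), hbound Lo hLod⟩ hconvLo
    have e1 : T (A.indicator f) ≤ T (A.indicator gh) := ge_of_tendsto' hlimHi hfU
    have e2 : T (A.indicator gh) ≤ T (A.indicator f) := le_of_tendsto' hlimLo hfL
    exact le_antisymm e1 e2
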